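/- arXiv:1312.1006 — 7 statements merged into one kernel-verified Lean document; each statement's English description precedes it below -/
import Mathlib

section
/- Let $f_t: L^0 \to \bar{L}^0_t$ be monotone, $L^0_t$-local, $L^0_t$-cash additive (i.e. $f_t(X+m)=f_t(X)+m$ for $X\in L^0$, $m\in L^0_t$), and satisfy $f_t(0)\ne\infty$ a.s. Then the extension $\widehat{f}_t(X)=\lim_{n\to\infty}f_t(X\vee(-n))$ satisfies $\widehat{f}_t(X+m)=\widehat{f}_t(X)+m$ a.s. for all $[-\infty,\infty)$-valued $X$ and all $[-\infty,\infty)$-valued $\mathcal{F}_t$-measurable $m$ (with the conventions $\infty-\infty=-\infty$ and $0\cdot\pm\infty=0$). -/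
open MeasureTheory Filter Set Topology

/-- Adding a real constant is an order isomorphism of `EReal`. -/
noncomputable def ERealAddRight (r : ℝ) : EReal ≃o EReal where
  toFun x := x + r
  invFun x := x - r
  left_inv _ := EReal.add_sub_cancel_right
  right_inv _ := EReal.sub_add_cancel
  map_rel_iff' := (EReal.addLECancellable_coe _).add_le_add_iff_right

lemma liminf_add_real (u : ℕ → EReal) (r : ℝ) :
    liminf (fun n => u n + (r : EReal)) atTop = liminf u atTop + (r : EReal) :=
  ((ERealAddRight r).liminf_apply).symm

lemma liminf_nat_sub (u : ℕ → EReal) (k : ℕ) :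
    liminf (fun n => u (n - k)) atTop = liminf u atTop := by
  rw [← liminf_nat_add (fun n => u (n - k)) k]
  simp [Nat.add_sub_cancel]

lemma trunc_shift (x : EReal) (hx : x ≠ ⊤) (r a : ℝ) :
    (max (x + (r : EReal)) (a : EReal)).toReal
      = (max x ((a - r : ℝ) : EReal)).toReal + r := by
  induction x using EReal.rec with
  | bot =>
      rw [EReal.bot_add, max_eq_right bot_le, max_eq_right bot_le,
        EReal.toReal_coe, EReal.toReal_coe]
      ring
  | coe s =>
      rw [← EReal.coe_add, ← (EReal.coe_strictMono.monotone).map_max,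
        ← (EReal.coe_strictMono.monotone).map_max, EReal.toReal_coe, EReal.toReal_coe,
        ← max_add_add_right]
      have h : a - r + r = a := by ring
      rw [h]
  | top => exact absurd rfl hx

lemma trunc_mono (x : EReal) (hx : x ≠ ⊤) {a b : ℝ} (h : a ≤ b) :
    (max x (a : EReal)).toReal ≤ (max x (b : EReal)).toReal :=
  EReal.toReal_le_toReal (max_le_max le_rfl (EReal.coe_le_coe_iff.2 h))
    ((lt_of_lt_of_le (EReal.bot_lt_coe a) (le_max_right _ _)).ne')
    ((max_lt (hx.lt_top) (EReal.coe_lt_top b)).ne)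

lemma liminf_const_add_neg (y : EReal) (hy : y ≠ ⊤) :
    liminf (fun n : ℕ => y + ((-(n : ℝ) : ℝ) : EReal)) atTop = ⊥ := by
  have h : Tendsto (fun n : ℕ => y + ((-(n : ℝ) : ℝ) : EReal)) atTop (𝓝 ⊥) := by
    rw [EReal.tendsto_nhds_bot_iff_real]
    intro x
    obtain ⟨r0, hr0⟩ : ∃ r0 : ℝ, y ≤ (r0 : EReal) := by
      induction y using EReal.rec with
      | bot => exact ⟨0, bot_le⟩
      | coe s => exact ⟨s, le_rfl⟩
      | top => exact absurd rfl hy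
    filter_upwards [eventually_gt_atTop ⌈r0 - x⌉₊] with n hn
    calc y + ((-(n : ℝ) : ℝ) : EReal) ≤ (r0 : EReal) + ((-(n : ℝ) : ℝ) : EReal) :=
          add_le_add_left hr0 _
      _ = ((r0 - n : ℝ) : EReal) := by push_cast; rfl
      _ < (x : EReal) := by
          refine EReal.coe_lt_coe_iff.2 ?_
          have h1 : (r0 - x) ≤ (⌈r0 - x⌉₊ : ℝ) := Nat.le_ceil _
          have h2 : ((⌈r0 - x⌉₊ : ℕ) : ℝ) < n := by exact_mod_cast hn
          linarith
  exact h.liminf_eq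

/-- The liminf (truncation) extension `f̂ₜ(X) = liminf_n fₜ(X ∨ (-n))`. -/
noncomputable def hatF {Ω : Type*} (f : (Ω → ℝ) → Ω → EReal) (X : Ω → EReal) : Ω → EReal :=
  fun ω => Filter.liminf (fun n : ℕ => f (fun ω' => (max (X ω') (-(n : ℝ))).toReal) ω) Filter.atTop

/-- if `fₜ` is monotone, `L⁰ₜ`-local, `L⁰ₜ`-cash additive and `fₜ(0) ≠ ∞` a.s.,
then the extension `f̂ₜ` satisfies `f̂ₜ(X + m) = f̂ₜ(X) + m` a.s. for all `[-∞,∞)`-valued `X`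
and all `[-∞,∞)`-valued `ℱₜ`-measurable `m`. (In `EReal`, `⊤ + ⊥ = ⊥`, matching the
convention `∞ - ∞ = -∞`; `Set.indicator` realizes `0 · (±∞) = 0`.) -/
theorem hatF_cash_additive {Ω : Type*} {mm : MeasurableSpace Ω} (mt : MeasurableSpace Ω)
    (hmt : mt ≤ mm) (P : Measure Ω) [IsProbabilityMeasure P]
    (f : (Ω → ℝ) → Ω → EReal)
    (hmeas : ∀ X : Ω → ℝ, Measurable[mt] (f X))
    (hmono : ∀ X Y : Ω → ℝ, (∀ᵐ ω ∂P, X ω ≤ Y ω) → ∀ᵐ ω ∂P, f X ω ≤ f Y ω)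
    (hlocal : ∀ A : Set Ω, MeasurableSet[mt] A → ∀ X : Ω → ℝ,
      ∀ᵐ ω ∂P, A.indicator (f X) ω = A.indicator (f (A.indicator X)) ω)
    (hcash : ∀ X : Ω → ℝ, ∀ c : Ω → ℝ, Measurable[mt] c →
      ∀ᵐ ω ∂P, f (fun ω' => X ω' + c ω') ω = f X ω + (c ω : EReal))
    (hzero : ∀ᵐ ω ∂P, f (fun _ => 0) ω ≠ ⊤)
    (X : Ω → EReal) (hX : ∀ ω, X ω ≠ ⊤)
    (c : Ω → EReal) (hc : Measurable[mt] c) (hctop : ∀ ω, c ω ≠ ⊤) :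
    ∀ᵐ ω ∂P, hatF f (fun ω' => X ω' + c ω') ω = hatF f X ω + c ω := by
  classical
  set cR : Ω → ℝ := fun ω => (c ω).toReal with hcRdef
  have hcRmeas : Measurable[mt] cR := hc.ereal_toReal
  set A : Set Ω := c ⁻¹' {⊥} with hAdef
  have hAmeas : MeasurableSet[mt] A := hc (measurableSet_singleton ⊥)
  set B : ℕ → Set Ω := fun k => {ω | c ω ≠ ⊥ ∧ cR ω ∈ Set.Icc (-(k : ℝ)) (k : ℝ)} with hBdef
  have hBmeas : ∀ k, MeasurableSet[mt] (B k) := by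
    intro k
    have h1 : MeasurableSet[mt] {ω | c ω ≠ ⊥} := (hc (measurableSet_singleton ⊥)).compl
    have h2 : MeasurableSet[mt] (cR ⁻¹' Set.Icc (-(k : ℝ)) (k : ℝ)) :=
      hcRmeas measurableSet_Icc
    exact h1.inter h2
  -- truncation of X
  set S : ℕ → Ω → ℝ := fun n ω' => (max (X ω') ((-(n : ℝ) : ℝ) : EReal)).toReal with hSdef
  -- truncation of X + c
  set T : ℕ → Ω → ℝ := fun n ω' => (max (X ω' + c ω') ((-(n : ℝ) : ℝ) : EReal)).toReal with hTdef
  have hhatXc : ∀ ω, hatF f (fun ω' => X ω' + c ω') ω = liminf (fun n => f (T n) ω) atTop :=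
    fun ω => rfl
  have hhatX : ∀ ω, hatF f X ω = liminf (fun n => f (S n) ω) atTop := fun ω => rfl
  -- Part A : on {c = ⊥}
  have hA : ∀ᵐ ω ∂P, ω ∈ A → hatF f (fun ω' => X ω' + c ω') ω = hatF f X ω + c ω := by
    have hindT : ∀ n : ℕ, A.indicator (T n) = A.indicator (fun _ => -(n : ℝ)) := by
      intro n
      funext ω'
      by_cases h : ω' ∈ A
      · rw [Set.indicator_of_mem h, Set.indicator_of_mem h]
        have hb : c ω' = ⊥ := h
        simp only [hTdef, hb, EReal.add_bot, max_eq_right bot_le, EReal.toReal_coe]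
      · rw [Set.indicator_of_notMem h, Set.indicator_of_notMem h]
    have hcashA : ∀ n : ℕ, ∀ᵐ ω ∂P,
        f (A.indicator (fun _ => -(n : ℝ))) ω
          = f (fun _ => 0) ω + ((A.indicator (fun _ => -(n : ℝ)) ω : ℝ) : EReal) := by
      intro n
      have hconst : Measurable[mt] (fun _ : Ω => -(n : ℝ)) := measurable_const
      have := hcash (fun _ => 0) (A.indicator (fun _ => -(n : ℝ))) (hconst.indicator hAmeas)
      filter_upwards [this] with ω hω
      simpa using hω
    filter_upwards [ae_all_iff.2 (fun n => hlocal A hAmeas (T n)), ae_all_iff.2 hcashA, hzero]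
      with ω hloc hca hz hmem
    have hbot : c ω = ⊥ := hmem
    rw [hhatXc, hbot, EReal.add_bot]
    have hu : (fun n : ℕ => f (T n) ω)
        = fun n : ℕ => f (fun _ => 0) ω + ((-(n : ℝ) : ℝ) : EReal) := by
      funext n
      have e1 := hloc n
      rw [Set.indicator_of_mem hmem, Set.indicator_of_mem hmem, hindT n] at e1
      rw [e1, hca n, Set.indicator_of_mem hmem]
    rw [hu]
    exact liminf_const_add_neg _ hz
  -- Part B : on {c ≠ ⊥, |cR| ≤ k}
  have hB : ∀ k : ℕ, ∀ᵐ ω ∂P, ω ∈ B k →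
      hatF f (fun ω' => X ω' + c ω') ω = hatF f X ω + c ω := by
    intro k
    set cB : Ω → ℝ := (B k).indicator cR with hcBdef
    have hcBmeas : Measurable[mt] cB := hcRmeas.indicator (hBmeas k)
    set U : ℕ → Ω → ℝ := fun m ω' => (B k).indicator (S m) ω' + cB ω' with hUdef
    set M : ℕ → Ω → ℝ := fun n => (B k).indicator (T n) with hMdef
    -- pointwise computation of T on B k
    have hTcomp : ∀ n : ℕ, ∀ ω', ω' ∈ B k →
        T n ω' = (max (X ω') ((-(n : ℝ) - cR ω' : ℝ) : EReal)).toReal + cR ω' := by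
      intro n ω' h
      have hcoe : c ω' = ((cR ω' : ℝ) : EReal) := (EReal.coe_toReal (hctop ω') h.1).symm
      simp only [hTdef, hcoe]
      exact trunc_shift (X ω') (hX ω') (cR ω') (-(n : ℝ))
    -- pointwise sandwich
    have hptl : ∀ n : ℕ, ∀ ω', U (n + k) ω' ≤ M n ω' := by
      intro n ω'
      by_cases h : ω' ∈ B k
      · simp only [hUdef, hMdef, hcBdef, Set.indicator_of_mem h]
        rw [hTcomp n ω' h]
        refine add_le_add_left ?_ _
        have h1 : (-((n + k : ℕ) : ℝ) : ℝ) ≤ -(n : ℝ) - cR ω' := by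
          have := h.2.2
          push_cast
          linarith
        exact trunc_mono (X ω') (hX ω') h1
      · simp [hUdef, hMdef, hcBdef, Set.indicator_of_notMem h]
    have hptu : ∀ n : ℕ, k ≤ n → ∀ ω', M n ω' ≤ U (n - k) ω' := by
      intro n hk ω'
      by_cases h : ω' ∈ B k
      · simp only [hUdef, hMdef, hcBdef, Set.indicator_of_mem h]
        rw [hTcomp n ω' h]
        refine add_le_add_left ?_ _
        have h1 : -(n : ℝ) - cR ω' ≤ (-((n - k : ℕ) : ℝ) : ℝ) := by
          have h2 := h.2.1
          have h3 : ((n - k : ℕ) : ℝ) = (n : ℝ) - (k : ℝ) := by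
            push_cast [Nat.cast_sub hk]
            ring
          rw [h3]
          linarith
        exact trunc_mono (X ω') (hX ω') h1
      · simp [hUdef, hMdef, hcBdef, Set.indicator_of_notMem h]
    have hmonol : ∀ n : ℕ, ∀ᵐ ω ∂P, f (U (n + k)) ω ≤ f (M n) ω :=
      fun n => hmono _ _ (ae_of_all _ (hptl n))
    have hmonou : ∀ n : ℕ, ∀ᵐ ω ∂P, k ≤ n → f (M n) ω ≤ f (U (n - k)) ω := by
      intro n
      by_cases hk : k ≤ n
      · filter_upwards [hmono _ _ (ae_of_all _ (hptu n hk))] with ω h _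
        exact h
      · exact ae_of_all _ fun ω h => absurd h hk
    have hcashB : ∀ m : ℕ, ∀ᵐ ω ∂P,
        f (U m) ω = f ((B k).indicator (S m)) ω + ((cB ω : ℝ) : EReal) :=
      fun m => hcash ((B k).indicator (S m)) cB hcBmeas
    filter_upwards [ae_all_iff.2 (fun n => hlocal (B k) (hBmeas k) (T n)),
      ae_all_iff.2 (fun m => hlocal (B k) (hBmeas k) (S m)),
      ae_all_iff.2 hcashB, ae_all_iff.2 hmonol, ae_all_iff.2 hmonou]
      with ω hlocT hlocS hcaB hl hup hmem
    have hcoeω : c ω = ((cR ω : ℝ) : EReal) := (EReal.coe_toReal (hctop ω) hmem.1).symm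
    -- identify f (T n) ω with f (M n) ω
    have hTM : ∀ n : ℕ, f (T n) ω = f (M n) ω := by
      intro n
      have e := hlocT n
      rw [Set.indicator_of_mem hmem, Set.indicator_of_mem hmem] at e
      exact e
    -- identify f (U m) ω with f (S m) ω + cR ω
    have hUS : ∀ m : ℕ, f (U m) ω = f (S m) ω + ((cR ω : ℝ) : EReal) := by
      intro m
      have e1 := hcaB m
      have e2 := hlocS m
      rw [Set.indicator_of_mem hmem, Set.indicator_of_mem hmem] at e2
      rw [e1, ← e2, hcBdef, Set.indicator_of_mem hmem]
    -- sandwich on liminfs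
    have hlower : hatF f X ω + ((cR ω : ℝ) : EReal) ≤ liminf (fun n => f (T n) ω) atTop := by
      have e1 : hatF f X ω + ((cR ω : ℝ) : EReal)
          = liminf (fun n : ℕ => f (S (n + k)) ω + ((cR ω : ℝ) : EReal)) atTop := by
        rw [liminf_add_real, liminf_nat_add (fun n => f (S n) ω) k, hhatX]
      rw [e1]
      refine liminf_le_liminf (Eventually.of_forall fun n => ?_)
      rw [hTM n, ← hUS (n + k)]
      exact hl n
    have hupper : liminf (fun n => f (T n) ω) atTop ≤ hatF f X ω + ((cR ω : ℝ) : EReal) := by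
      have e1 : hatF f X ω + ((cR ω : ℝ) : EReal)
          = liminf (fun n : ℕ => f (S (n - k)) ω + ((cR ω : ℝ) : EReal)) atTop := by
        rw [liminf_add_real, liminf_nat_sub (fun n => f (S n) ω) k, hhatX]
      rw [e1]
      refine liminf_le_liminf ?_
      filter_upwards [eventually_ge_atTop k] with n hn
      rw [hTM n, ← hUS (n - k)]
      exact hup n hn
    rw [hhatXc, hcoeω]
    exact le_antisymm hupper hlower
  -- combine
  have hcover : ∀ ω, ω ∈ A ∨ ∃ k, ω ∈ B k := by
    intro ω
    by_cases h : c ω = ⊥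
    · exact Or.inl h
    · exact Or.inr ⟨⌈|cR ω|⌉₊, h, abs_le.1 ((Nat.le_ceil _).trans le_rfl)⟩
  filter_upwards [hA, ae_all_iff.2 hB] with ω h1 h2
  rcases hcover ω with h | ⟨k, h⟩
  · exact h1 h
  · exact h2 k h
end

section
/- With notation as in the definition of DLGI, suppose $\{\mu_t\}$ is monotone and $L^\infty_t$-local and satisfies $\liminf_{T\to\infty}\frac{1}{T}\mu_t(\ln(V_T/V_t)) = \liminf_{T\to\infty}\frac{1}{T}\mu_t(\ln V_T)$ for all $V\in\mathbb{V}$. Then $\varphi_t(V)=\liminf_{T\to\infty}\frac{1}{T}\mu_t(\ln V_T)$ is $L^\infty_t$-quasi-concave on $\mathbb{V}$: for $\lambda\in L^\infty_t$ with $0\le\lambda\le 1$, $\varphi_t(\lambda\cdot_t V + (1-\lambda)\cdot_t V') \ge \varphi_t(V)\wedge\varphi_t(V')$. -/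
open MeasureTheory Filter Set

/-- Extended-real logarithm of a (nonnegative) real, with `ln 0 = -∞`. -/
noncomputable def elog (x : ℝ) : EReal := if x ≤ 0 then ⊥ else ((Real.log x : ℝ) : EReal)

/-- Membership in the cone `𝕍` of nonnegative adapted processes absorbed at `0`. -/
def MemV {Ω : Type*} [m : MeasurableSpace Ω] (ℱ : MeasureTheory.Filtration ℕ m)
    (V : ℕ → Ω → ℝ) : Prop :=
  (∀ t, Measurable[ℱ t] (V t)) ∧ (∀ t ω, 0 ≤ V t ω) ∧
    (∀ s t : ℕ, s ≤ t → ∀ ω, V s ω = 0 → V t ω = 0)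

/-- `φₜ(V) = liminf_{T→∞} (1/T) μₜ(ln V_T)`. -/
noncomputable def DLGI0 {Ω : Type*} (μ : ℕ → (Ω → EReal) → Ω → EReal)
    (t : ℕ) (V : ℕ → Ω → ℝ) : Ω → EReal :=
  fun ω => Filter.liminf
    (fun T : ℕ => (((T : ℝ)⁻¹ : ℝ) : EReal) * μ t (fun ω' => elog (V T ω')) ω)
    Filter.atTop

/-- The convex combination `λ ·ₜ V + (1-λ) ·ₜ V'` of two processes, where `·ₜ`
multiplies only the entries with index `≥ t`. -/
def combV {Ω : Type*} (t : ℕ) (lam : Ω → ℝ) (V V' : ℕ → Ω → ℝ) : ℕ → Ω → ℝ :=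
  fun T ω => if t ≤ T then lam ω * V T ω + (1 - lam ω) * V' T ω else V T ω + V' T ω

lemma elog_mono : Monotone elog := by
  intro a b hab
  unfold elog
  by_cases ha : a ≤ 0
  · simp [ha]
  · have hb : ¬ b ≤ 0 := fun h => ha (hab.trans h)
    simp only [if_neg ha, if_neg hb, EReal.coe_le_coe_iff]
    exact Real.log_le_log (lt_of_not_ge ha) hab

/-- Scaling a process of `𝕍` from time `t` on by a nonnegative `ℱ t`-measurable
factor stays in `𝕍`. -/
lemma memV_scale {Ω : Type*} [m : MeasurableSpace Ω] (ℱ : MeasureTheory.Filtration ℕ m)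
    (t : ℕ) (V : ℕ → Ω → ℝ) (hV : MemV ℱ V) (c : Ω → ℝ) (hc : Measurable[ℱ t] c)
    (hc0 : ∀ ω, 0 ≤ c ω) :
    MemV ℱ (fun T ω => if t ≤ T then c ω * V T ω else V T ω) := by
  refine ⟨fun s => ?_, fun s ω => ?_, fun s T hsT ω h0 => ?_⟩
  · by_cases h : t ≤ s
    · simp only [if_pos h]
      exact (hc.mono (ℱ.mono h) le_rfl).mul (hV.1 s)
    · simp only [if_neg h]
      exact hV.1 s
  · by_cases h : t ≤ s
    · simp only [if_pos h]
      exact mul_nonneg (hc0 ω) (hV.2.1 s ω)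
    · simp only [if_neg h]
      exact hV.2.1 s ω
  · by_cases h1 : t ≤ s
    · have h2 : t ≤ T := h1.trans hsT
      simp only [if_pos h1] at h0
      simp only [if_pos h2]
      rcases mul_eq_zero.mp h0 with hc' | hv'
      · rw [hc', zero_mul]
      · rw [hV.2.2 s T hsT ω hv', mul_zero]
    · simp only [if_neg h1] at h0
      have hT0 : V T ω = 0 := hV.2.2 s T hsT ω h0
      by_cases h2 : t ≤ T <;> simp [h2, hT0]

/-- Monotonicity of `DLGI0` with respect to pointwise ordering of processes. -/
lemma dlgi_mono {Ω : Type*} [m : MeasurableSpace Ω] (P : Measure Ω)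
    (μ : ℕ → (Ω → EReal) → Ω → EReal) (t : ℕ)
    (hmono : ∀ X Y : Ω → EReal, (∀ᵐ ω ∂P, X ω ≤ Y ω) → ∀ᵐ ω ∂P, μ t X ω ≤ μ t Y ω)
    (W₁ W₂ : ℕ → Ω → ℝ) (h : ∀ T ω, W₁ T ω ≤ W₂ T ω) :
    ∀ᵐ ω ∂P, DLGI0 μ t W₁ ω ≤ DLGI0 μ t W₂ ω := by
  have hae : ∀ᵐ ω ∂P, ∀ T : ℕ,
      μ t (fun ω' => elog (W₁ T ω')) ω ≤ μ t (fun ω' => elog (W₂ T ω')) ω :=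
    ae_all_iff.mpr fun T =>
      hmono _ _ (Filter.Eventually.of_forall fun ω => elog_mono (h T ω))
  filter_upwards [hae] with ω hω
  refine Filter.liminf_le_liminf (Filter.Eventually.of_forall fun T => ?_)
  exact mul_le_mul_of_nonneg_left (hω T)
    (EReal.coe_nonneg.mpr (inv_nonneg.mpr (Nat.cast_nonneg T)))

/-- `DLGI0` is invariant (a.e. on `{0 < c}`) under scaling from time `t` on by an
`ℱ t`-measurable nonnegative factor `c`, thanks to locality and the
"log-return" hypothesis. -/
lemma dlgi_scale {Ω : Type*} [m : MeasurableSpace Ω] (P : Measure Ω)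
    (ℱ : MeasureTheory.Filtration ℕ m) (μ : ℕ → (Ω → EReal) → Ω → EReal)
    (hlocal : ∀ t, ∀ A : Set Ω, MeasurableSet[ℱ t] A → ∀ X : Ω → EReal,
      ∀ᵐ ω ∂P, A.indicator (μ t X) ω = A.indicator (μ t (A.indicator X)) ω)
    (henough : ∀ t, ∀ V : ℕ → Ω → ℝ, MemV ℱ V →
      ∀ᵐ ω ∂P,
        Filter.liminf
          (fun T : ℕ => (((T : ℝ)⁻¹ : ℝ) : EReal) * μ t (fun ω' => elog (V T ω' / V t ω')) ω)
          Filter.atTop = DLGI0 μ t V ω)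
    (t : ℕ) (V : ℕ → Ω → ℝ) (hV : MemV ℱ V) (c : Ω → ℝ) (hc : Measurable[ℱ t] c)
    (hc0 : ∀ ω, 0 ≤ c ω) :
    ∀ᵐ ω ∂P, 0 < c ω →
      DLGI0 μ t (fun T ω => if t ≤ T then c ω * V T ω else V T ω) ω = DLGI0 μ t V ω := by
  set U : ℕ → Ω → ℝ := fun T ω => if t ≤ T then c ω * V T ω else V T ω with hUdef
  have hU : MemV ℱ U := memV_scale ℱ t V hV c hc hc0
  set A : Set Ω := {ω | 0 < c ω} with hAdef
  have hA : MeasurableSet[ℱ t] A := measurableSet_lt measurable_const hc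
  -- on A, the log-returns of U and of V agree (for T ≥ t)
  have hkey : ∀ T : ℕ, t ≤ T → ∀ᵐ ω ∂P, ω ∈ A →
      μ t (fun ω' => elog (U T ω' / U t ω')) ω = μ t (fun ω' => elog (V T ω' / V t ω')) ω := by
    intro T hT
    have hfun : A.indicator (fun ω' => elog (U T ω' / U t ω')) =
        A.indicator (fun ω' => elog (V T ω' / V t ω')) := by
      funext ω'
      by_cases hω : ω' ∈ A
      · simp only [Set.indicator_of_mem hω]
        have h1 : U T ω' = c ω' * V T ω' := if_pos hT
        have h2 : U t ω' = c ω' * V t ω' := if_pos le_rfl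
        rw [h1, h2, mul_div_mul_left _ _ (ne_of_gt hω)]
      · simp only [Set.indicator_of_notMem hω]
    filter_upwards [hlocal t A hA (fun ω' => elog (U T ω' / U t ω')),
      hlocal t A hA (fun ω' => elog (V T ω' / V t ω'))] with ω e1 e2 hω
    have h3 : A.indicator (μ t fun ω' => elog (U T ω' / U t ω')) ω =
        A.indicator (μ t fun ω' => elog (V T ω' / V t ω')) ω := by
      rw [e1, hfun, ← e2]
    rwa [Set.indicator_of_mem hω, Set.indicator_of_mem hω] at h3
  have hall : ∀ᵐ ω ∂P, ∀ T : ℕ, t ≤ T → ω ∈ A →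
      μ t (fun ω' => elog (U T ω' / U t ω')) ω = μ t (fun ω' => elog (V T ω' / V t ω')) ω := by
    rw [ae_all_iff]
    intro T
    by_cases hT : t ≤ T
    · filter_upwards [hkey T hT] with ω hω _
      exact hω
    · exact Filter.Eventually.of_forall fun ω hT' => absurd hT' hT
  filter_upwards [hall, henough t U hU, henough t V hV] with ω h1 h2 h3 hpos
  have hωA : ω ∈ A := hpos
  have heq : Filter.liminf
      (fun T : ℕ => (((T : ℝ)⁻¹ : ℝ) : EReal) * μ t (fun ω' => elog (U T ω' / U t ω')) ω)
      Filter.atTop =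
      Filter.liminf
      (fun T : ℕ => (((T : ℝ)⁻¹ : ℝ) : EReal) * μ t (fun ω' => elog (V T ω' / V t ω')) ω)
      Filter.atTop := by
    refine Filter.liminf_congr ?_
    filter_upwards [Filter.eventually_ge_atTop t] with T hT
    rw [h1 T hT hωA]
  rw [← h2, heq, h3]

/-- if the monotone local family `{μₜ}` satisfies
`liminf (1/T) μₜ(ln(V_T/V_t)) = liminf (1/T) μₜ(ln V_T)` on `𝕍`, then
`φₜ(V) = liminf (1/T) μₜ(ln V_T)` is `L^∞ₜ`-quasi-concave on `𝕍`. -/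
theorem dlgi_quasiconcave {Ω : Type*} [m : MeasurableSpace Ω] (P : Measure Ω)
    [IsProbabilityMeasure P] (ℱ : MeasureTheory.Filtration ℕ m)
    (μ : ℕ → (Ω → EReal) → Ω → EReal)
    (hmeas : ∀ t X, Measurable[ℱ t] (μ t X))
    (hmono : ∀ t, ∀ X Y : Ω → EReal, (∀ᵐ ω ∂P, X ω ≤ Y ω) → ∀ᵐ ω ∂P, μ t X ω ≤ μ t Y ω)
    (hlocal : ∀ t, ∀ A : Set Ω, MeasurableSet[ℱ t] A → ∀ X : Ω → EReal,
      ∀ᵐ ω ∂P, A.indicator (μ t X) ω = A.indicator (μ t (A.indicator X)) ω)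
    (henough : ∀ t, ∀ V : ℕ → Ω → ℝ, MemV ℱ V →
      ∀ᵐ ω ∂P,
        Filter.liminf
          (fun T : ℕ => (((T : ℝ)⁻¹ : ℝ) : EReal) * μ t (fun ω' => elog (V T ω' / V t ω')) ω)
          Filter.atTop = DLGI0 μ t V ω)
    (t : ℕ) (V V' : ℕ → Ω → ℝ) (hV : MemV ℱ V) (hV' : MemV ℱ V')
    (lam : Ω → ℝ) (hlam : Measurable[ℱ t] lam) (hlam0 : ∀ ω, 0 ≤ lam ω) (hlam1 : ∀ ω, lam ω ≤ 1) :
    ∀ᵐ ω ∂P, min (DLGI0 μ t V ω) (DLGI0 μ t V' ω) ≤ DLGI0 μ t (combV t lam V V') ω := by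
  set U : ℕ → Ω → ℝ := fun T ω => if t ≤ T then lam ω * V T ω else V T ω with hUdef
  set U' : ℕ → Ω → ℝ := fun T ω => if t ≤ T then (1 - lam ω) * V' T ω else V' T ω with hU'def
  have hle : ∀ T ω, U T ω ≤ combV t lam V V' T ω := by
    intro T ω
    simp only [hUdef, combV]
    by_cases h : t ≤ T
    · simp only [if_pos h]
      exact le_add_of_nonneg_right (mul_nonneg (by linarith [hlam1 ω]) (hV'.2.1 T ω))
    · simp only [if_neg h]
      exact le_add_of_nonneg_right (hV'.2.1 T ω)
  have hle' : ∀ T ω, U' T ω ≤ combV t lam V V' T ω := by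
    intro T ω
    simp only [hU'def, combV]
    by_cases h : t ≤ T
    · simp only [if_pos h]
      exact le_add_of_nonneg_left (mul_nonneg (hlam0 ω) (hV.2.1 T ω))
    · simp only [if_neg h]
      exact le_add_of_nonneg_left (hV.2.1 T ω)
  have hlam' : Measurable[ℱ t] (fun ω => 1 - lam ω) :=
    (measurable_const : Measurable[ℱ t] fun _ => (1 : ℝ)).sub hlam
  filter_upwards [dlgi_mono P μ t (hmono t) U (combV t lam V V') hle,
    dlgi_mono P μ t (hmono t) U' (combV t lam V V') hle',
    dlgi_scale P ℱ μ hlocal henough t V hV lam hlam hlam0,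
    dlgi_scale P ℱ μ hlocal henough t V' hV' (fun ω => 1 - lam ω) hlam'
      (fun ω => sub_nonneg.mpr (hlam1 ω))] with ω hUW hU'W hUV hU'V'
  by_cases h : 0 < lam ω
  · calc min (DLGI0 μ t V ω) (DLGI0 μ t V' ω) ≤ DLGI0 μ t V ω := min_le_left _ _
      _ = DLGI0 μ t U ω := (hUV h).symm
      _ ≤ _ := hUW
  · have h0 : 0 < 1 - lam ω := by
      have := le_antisymm (not_lt.mp h) (hlam0 ω)
      linarith
    calc min (DLGI0 μ t V ω) (DLGI0 μ t V' ω) ≤ DLGI0 μ t V' ω := min_le_right _ _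
      _ = DLGI0 μ t U' ω := (hU'V' h0).symm
      _ ≤ _ := hU'W
end

section
/- Let $\{\varphi_t\}$ be the DLGI generated by a monotone, $L^\infty_t$-local family $\{\mu_t\}$, i.e. $\varphi_t(V)=\liminf_{T\to\infty}\frac{1}{T}\mu_t(\ln(V_T/V_t))$. If each $\varphi_t$ is monotone and $L^\infty_t$-local on $\mathbb{V}$ (i.e., $\{\varphi_t\}$ is a dynamic assessment index), then for all $t$ and all $V\in\mathbb{V}$, $\liminf_{T\to\infty}\frac{1}{T}\mu_t(\ln(V_T/V_t)) = \liminf_{T\to\infty}\frac{1}{T}\mu_t(\ln V_T)$. -/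
open MeasureTheory Filter Set

/-- The DLGI generated by `μ`: `φₜ(V) = liminf_{T→∞} (1/T) μₜ(ln(V_T/V_t))`. -/
noncomputable def DLGI {Ω : Type*} (μ : ℕ → (Ω → EReal) → Ω → EReal)
    (t : ℕ) (V : ℕ → Ω → ℝ) : Ω → EReal :=
  fun ω => Filter.liminf
    (fun T : ℕ => (((T : ℝ)⁻¹ : ℝ) : EReal) * μ t (fun ω' => elog (V T ω' / V t ω')) ω)
    Filter.atTop

/-- The product `m ·ₜ V`, multiplying only the entries with index `≥ t`; here the
multiplier is the indicator of a set `A ∈ ℱₜ`. -/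
noncomputable def indMulV {Ω : Type*} (t : ℕ) (A : Set Ω) (V : ℕ → Ω → ℝ) : ℕ → Ω → ℝ :=
  fun T ω => if t ≤ T then A.indicator (V T) ω else V T ω

/-- if the DLGI `{φₜ}` generated by a monotone local family `{μₜ}` is itself
monotone and `L^∞ₜ`-local on `𝕍` (i.e. is a dynamic assessment index), then
`liminf (1/T) μₜ(ln(V_T/V_t)) = liminf (1/T) μₜ(ln V_T)` a.s. for all `t` and `V ∈ 𝕍`. -/
theorem dai_implies_enough {Ω : Type*} [m : MeasurableSpace Ω] (P : Measure Ω)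
    [IsProbabilityMeasure P] (ℱ : MeasureTheory.Filtration ℕ m)
    (μ : ℕ → (Ω → EReal) → Ω → EReal)
    (hmeas : ∀ t X, Measurable[ℱ t] (μ t X))
    (hmono : ∀ t, ∀ X Y : Ω → EReal, (∀ᵐ ω ∂P, X ω ≤ Y ω) → ∀ᵐ ω ∂P, μ t X ω ≤ μ t Y ω)
    (hlocal : ∀ t, ∀ A : Set Ω, MeasurableSet[ℱ t] A → ∀ X : Ω → EReal,
      ∀ᵐ ω ∂P, A.indicator (μ t X) ω = A.indicator (μ t (A.indicator X)) ω)
    (hphimono : ∀ t, ∀ V V' : ℕ → Ω → ℝ, MemV ℱ V → MemV ℱ V' →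
      (∀ T : ℕ, ∀ᵐ ω ∂P, V' T ω ≤ V T ω) → ∀ᵐ ω ∂P, DLGI μ t V' ω ≤ DLGI μ t V ω)
    (hphilocal : ∀ t, ∀ A : Set Ω, MeasurableSet[ℱ t] A → ∀ V : ℕ → Ω → ℝ, MemV ℱ V →
      ∀ᵐ ω ∂P, A.indicator (DLGI μ t V) ω = A.indicator (DLGI μ t (indMulV t A V)) ω)
    (t : ℕ) (V : ℕ → Ω → ℝ) (hV : MemV ℱ V) :
    ∀ᵐ ω ∂P, DLGI μ t V ω =
      Filter.liminf
        (fun T : ℕ => (((T : ℝ)⁻¹ : ℝ) : EReal) * μ t (fun ω' => elog (V T ω')) ω)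
        Filter.atTop := by
  classical
  -- the (nonnegative) scaling constants
  set c : ℕ → EReal := fun T => (((T : ℝ)⁻¹ : ℝ) : EReal) with hc_def
  have hc : ∀ T : ℕ, (0 : EReal) ≤ c T := by
    intro T
    have h0 : (0 : ℝ) ≤ ((T : ℝ))⁻¹ := inv_nonneg.mpr (Nat.cast_nonneg T)
    exact EReal.coe_nonneg.mpr h0
  -- the set where `V t ≥ 1`
  set A : Set Ω := {ω | 1 ≤ V t ω} with hA_def
  have hA : MeasurableSet[ℱ t] A := measurableSet_le measurable_const (hV.1 t)
  have hB : MeasurableSet[ℱ t] Aᶜ := hA.compl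
  -- locality + monotonicity of μ, in a convenient pointwise-on-a-set form
  have key_le : ∀ (S : Set Ω), MeasurableSet[ℱ t] S → ∀ X Y : Ω → EReal,
      (∀ ω ∈ S, X ω ≤ Y ω) → ∀ᵐ ω ∂P, ω ∈ S → μ t X ω ≤ μ t Y ω := by
    intro S hS X Y hXY
    have hind : ∀ ω, S.indicator X ω ≤ S.indicator Y ω := by
      intro ω
      by_cases hω : ω ∈ S
      · simpa [Set.indicator_of_mem hω] using hXY ω hω
      · simp [Set.indicator_of_notMem hω]
    filter_upwards [hlocal t S hS X, hlocal t S hS Y,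
      hmono t (S.indicator X) (S.indicator Y) (Filter.Eventually.of_forall hind)]
      with ω h1 h2 h3 hωS
    rw [Set.indicator_of_mem hωS, Set.indicator_of_mem hωS] at h1 h2
    rw [h1, h2]
    exact h3
  have key_eq : ∀ (S : Set Ω), MeasurableSet[ℱ t] S → ∀ X Y : Ω → EReal,
      (∀ ω ∈ S, X ω = Y ω) → ∀ᵐ ω ∂P, ω ∈ S → μ t X ω = μ t Y ω := by
    intro S hS X Y hXY
    have hind : S.indicator X = S.indicator Y := by
      funext ω
      by_cases hω : ω ∈ S
      · simpa [Set.indicator_of_mem hω] using hXY ω hω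
      · simp [Set.indicator_of_notMem hω]
    filter_upwards [hlocal t S hS X, hlocal t S hS Y] with ω h1 h2 hωS
    rw [Set.indicator_of_mem hωS, Set.indicator_of_mem hωS] at h1 h2
    rw [h1, h2, hind]
  -- building modified processes in 𝕍 by changing only the entry at time `t`
  have memV_update : ∀ f : Ω → ℝ, Measurable[ℱ t] f → (∀ ω, 0 ≤ f ω) →
      (∀ ω, V t ω = 0 ↔ f ω = 0) → MemV ℱ (Function.update V t f) := by
    intro f hf hf0 hfz
    refine ⟨?_, ?_, ?_⟩
    · intro s
      by_cases hs : s = t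
      · rw [hs, Function.update_self]; exact hf
      · rw [Function.update_of_ne hs]; exact hV.1 s
    · intro s ω
      by_cases hs : s = t
      · rw [hs, Function.update_self]; exact hf0 ω
      · rw [Function.update_of_ne hs]; exact hV.2.1 s ω
    · intro s u hsu ω h0
      by_cases hs : s = t
      · rw [hs] at h0 hsu
        rw [Function.update_self] at h0
        have hVt : V t ω = 0 := (hfz ω).mpr h0
        by_cases hu : u = t
        · rw [hu, Function.update_self]; exact h0
        · rw [Function.update_of_ne hu]; exact hV.2.2 t u hsu ω hVt
      · rw [Function.update_of_ne hs] at h0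
        by_cases hu : u = t
        · rw [hu, Function.update_self]
          refine (hfz ω).mp (hV.2.2 s t ?_ ω h0)
          rw [← hu]; exact hsu
        · rw [Function.update_of_ne hu]; exact hV.2.2 s u hsu ω h0
  -- Step I : on A, for each T, μ(log(V_T/V_t)) ≤ μ(log V_T)
  have stepI : ∀ᵐ ω ∂P, ω ∈ A →
      DLGI μ t V ω ≤
        Filter.liminf (fun T : ℕ => c T * μ t (fun ω' => elog (V T ω')) ω) Filter.atTop := by
    have hT : ∀ T : ℕ, ∀ᵐ ω ∂P, ω ∈ A →
        μ t (fun ω' => elog (V T ω' / V t ω')) ω ≤ μ t (fun ω' => elog (V T ω')) ω := by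
      intro T
      apply key_le A hA
      intro ω' hω'
      exact elog_mono (div_le_self (hV.2.1 T ω') hω')
    filter_upwards [ae_all_iff.mpr hT] with ω hω hωA
    refine Filter.liminf_le_liminf (Filter.Eventually.of_forall fun T => ?_)
    exact mul_le_mul_of_nonneg_left (hω T hωA) (hc T)
  -- Step II : on Aᶜ, for each T ≥ t, μ(log V_T) ≤ μ(log(V_T/V_t))
  have stepII : ∀ᵐ ω ∂P, ω ∈ Aᶜ →
      Filter.liminf (fun T : ℕ => c T * μ t (fun ω' => elog (V T ω')) ω) Filter.atTop ≤
        DLGI μ t V ω := by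
    have hT : ∀ T : ℕ, ∀ᵐ ω ∂P, t ≤ T → (ω ∈ Aᶜ →
        μ t (fun ω' => elog (V T ω')) ω ≤ μ t (fun ω' => elog (V T ω' / V t ω')) ω) := by
      intro T
      by_cases htT : t ≤ T
      · have hpt : ∀ ω' ∈ Aᶜ, elog (V T ω') ≤ elog (V T ω' / V t ω') := by
          intro ω' hω'
          have hlt : V t ω' < 1 := not_le.mp hω'
          rcases eq_or_lt_of_le (hV.2.1 t ω') with hz | hpos
          · have hzT : V T ω' = 0 := hV.2.2 t T htT ω' hz.symm
            simp [hzT]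
          · refine elog_mono ?_
            rw [le_div_iff₀ hpos]
            exact mul_le_of_le_one_right (hV.2.1 T ω') hlt.le
        filter_upwards [key_le Aᶜ hB (fun ω' => elog (V T ω'))
          (fun ω' => elog (V T ω' / V t ω')) hpt] with ω h _
        exact h
      · exact Filter.Eventually.of_forall fun ω h => absurd h htT
    filter_upwards [ae_all_iff.mpr hT] with ω hω hωA
    refine Filter.liminf_le_liminf ?_
    filter_upwards [Filter.eventually_ge_atTop t] with T hTt
    exact mul_le_mul_of_nonneg_left (hω T hTt hωA) (hc T)
  -- Step III : on A, liminf μ(log V_T) ≤ DLGI V, via V' with V'_t = min(V_t, 1)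
  set f₁ : Ω → ℝ := fun ω => min (V t ω) 1 with hf₁_def
  have hV₁ : MemV ℱ (Function.update V t f₁) := by
    refine memV_update f₁ ((hV.1 t).min measurable_const) (fun ω => le_min (hV.2.1 t ω) zero_le_one) ?_
    intro ω
    constructor
    · intro h; simp [hf₁_def, h]
    · intro h
      by_contra hne
      have hpos : 0 < V t ω := lt_of_le_of_ne (hV.2.1 t ω) (Ne.symm hne)
      exact absurd h (ne_of_gt (lt_min hpos one_pos))
  have stepIII : ∀ᵐ ω ∂P, ω ∈ A →
      Filter.liminf (fun T : ℕ => c T * μ t (fun ω' => elog (V T ω')) ω) Filter.atTop ≤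
        DLGI μ t V ω := by
    have hle : ∀ T : ℕ, ∀ᵐ ω ∂P, Function.update V t f₁ T ω ≤ V T ω := by
      intro T
      refine Filter.Eventually.of_forall fun ω => ?_
      by_cases hs : T = t
      · rw [hs, Function.update_self]
        exact min_le_left _ _
      · rw [Function.update_of_ne hs]
    have hphi := hphimono t V (Function.update V t f₁) hV hV₁ hle
    have hTeq : ∀ T : ℕ, ∀ᵐ ω ∂P, t < T → (ω ∈ A →
        μ t (fun ω' => elog (Function.update V t f₁ T ω' / Function.update V t f₁ t ω')) ω =
          μ t (fun ω' => elog (V T ω')) ω) := by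
      intro T
      by_cases htT : t < T
      · have hpt : ∀ ω' ∈ A,
            elog (Function.update V t f₁ T ω' / Function.update V t f₁ t ω') =
              elog (V T ω') := by
          intro ω' hω'
          have h1 : Function.update V t f₁ T ω' = V T ω' := by
            rw [Function.update_of_ne (Nat.ne_of_gt htT)]
          have h2 : Function.update V t f₁ t ω' = 1 := by
            rw [Function.update_self]; exact min_eq_right hω'
          rw [h1, h2, div_one]
        filter_upwards [key_eq A hA
          (fun ω' => elog (Function.update V t f₁ T ω' / Function.update V t f₁ t ω'))
          (fun ω' => elog (V T ω')) hpt] with ω h _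
        exact h
      · exact Filter.Eventually.of_forall fun ω h => absurd h htT
    filter_upwards [hphi, ae_all_iff.mpr hTeq] with ω hω hall hωA
    have hcongr : DLGI μ t (Function.update V t f₁) ω =
        Filter.liminf (fun T : ℕ => c T * μ t (fun ω' => elog (V T ω')) ω) Filter.atTop := by
      apply Filter.liminf_congr
      filter_upwards [Filter.eventually_gt_atTop t] with T hTt
      rw [hall T hTt hωA]
    rw [← hcongr]
    exact hω
  -- Step IV : on Aᶜ, DLGI V ≤ liminf μ(log V_T), via V'' with V''_t = 1 unless V_t = 0
  set f₂ : Ω → ℝ := fun ω => if V t ω = 0 then 0 else max (V t ω) 1 with hf₂_def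
  have hV₂ : MemV ℱ (Function.update V t f₂) := by
    refine memV_update f₂ ?_ ?_ ?_
    · exact Measurable.ite ((hV.1 t) (measurableSet_singleton 0)) measurable_const
        ((hV.1 t).max measurable_const)
    · intro ω
      by_cases h : V t ω = 0
      · simp [hf₂_def, h]
      · simp only [hf₂_def, if_neg h]
        exact le_trans zero_le_one (le_max_right _ _)
    · intro ω
      constructor
      · intro h; simp [hf₂_def, h]
      · intro h
        by_contra hne
        simp only [hf₂_def, if_neg hne] at h
        have : (1 : ℝ) ≤ 0 := h ▸ le_max_right _ _
        linarith
  have stepIV : ∀ᵐ ω ∂P, ω ∈ Aᶜ →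
      DLGI μ t V ω ≤
        Filter.liminf (fun T : ℕ => c T * μ t (fun ω' => elog (V T ω')) ω) Filter.atTop := by
    have hle : ∀ T : ℕ, ∀ᵐ ω ∂P, V T ω ≤ Function.update V t f₂ T ω := by
      intro T
      refine Filter.Eventually.of_forall fun ω => ?_
      by_cases hs : T = t
      · rw [hs, Function.update_self]
        have : V t ω ≤ f₂ ω := by
          by_cases h : V t ω = 0
          · simp [hf₂_def, h]
          · simp only [hf₂_def, if_neg h]
            exact le_max_left _ _
        exact this
      · rw [Function.update_of_ne hs]
    have hphi := hphimono t (Function.update V t f₂) V hV₂ hV hle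
    have hTeq : ∀ T : ℕ, ∀ᵐ ω ∂P, t < T → (ω ∈ Aᶜ →
        μ t (fun ω' => elog (Function.update V t f₂ T ω' / Function.update V t f₂ t ω')) ω =
          μ t (fun ω' => elog (V T ω')) ω) := by
      intro T
      by_cases htT : t < T
      · have hpt : ∀ ω' ∈ Aᶜ,
            elog (Function.update V t f₂ T ω' / Function.update V t f₂ t ω') =
              elog (V T ω') := by
          intro ω' hω'
          have hlt : V t ω' < 1 := not_le.mp hω'
          have h1 : Function.update V t f₂ T ω' = V T ω' := by
            rw [Function.update_of_ne (Nat.ne_of_gt htT)]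
          by_cases hz : V t ω' = 0
          · have hzT : V T ω' = 0 := hV.2.2 t T htT.le ω' hz
            have h2 : Function.update V t f₂ t ω' = 0 := by
              rw [Function.update_self]; simp [hf₂_def, hz]
            rw [h1, h2, hzT, zero_div]
          · have h2 : Function.update V t f₂ t ω' = 1 := by
              rw [Function.update_self]
              simp only [hf₂_def, if_neg hz]
              exact max_eq_right hlt.le
            rw [h1, h2, div_one]
        filter_upwards [key_eq Aᶜ hB
          (fun ω' => elog (Function.update V t f₂ T ω' / Function.update V t f₂ t ω'))
          (fun ω' => elog (V T ω')) hpt] with ω h _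
        exact h
      · exact Filter.Eventually.of_forall fun ω h => absurd h htT
    filter_upwards [hphi, ae_all_iff.mpr hTeq] with ω hω hall hωA
    have hcongr : DLGI μ t (Function.update V t f₂) ω =
        Filter.liminf (fun T : ℕ => c T * μ t (fun ω' => elog (V T ω')) ω) Filter.atTop := by
      apply Filter.liminf_congr
      filter_upwards [Filter.eventually_gt_atTop t] with T hTt
      rw [hall T hTt hωA]
    rw [← hcongr]
    exact hω
  -- combine
  filter_upwards [stepI, stepII, stepIII, stepIV] with ω h1 h2 h3 h4
  by_cases hω : ω ∈ A
  · exact le_antisymm (h1 hω) (h3 hω)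
  · exact le_antisymm (h4 hω) (h2 hω)
end

section
/- Let $\{\rho_t\}$ be a dynamic risk measure and define $\widetilde{\rho}_t(X)=\rho_t(X^+)$. Then for every $V\in\mathbb{V}$ with $P[V_t>0]=1$: $\liminf_{T\to\infty}\frac{-\rho_t([\ln(V_T/V_t)]^+)}{T} = \liminf_{T\to\infty}\frac{-\rho_t([\ln V_T]^+)}{T}$ a.s. -/
open MeasureTheory Filter Set

private lemma ereal_coe_max (a b : ℝ) : (max a b : ℝ) = max (a : EReal) (b : EReal) := by
  rcases le_total a b with h | h
  · rw [max_eq_right h, max_eq_right (EReal.coe_le_coe_iff.2 h)]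
  · rw [max_eq_left h, max_eq_left (EReal.coe_le_coe_iff.2 h)]

/-- The key pointwise inequalities between `[ln(x/v)]⁺` and `[ln x]⁺`. -/
private lemma elog_ineq (v x : ℝ) (hv : 0 < v) (hx : 0 ≤ x) :
    max (elog (x / v)) 0 ≤ max (elog x) 0 + ((|Real.log v| : ℝ) : EReal) ∧
      max (elog x) 0 ≤ max (elog (x / v)) 0 + ((|Real.log v| : ℝ) : EReal) := by
  have habs : (0 : EReal) ≤ ((|Real.log v| : ℝ) : EReal) :=
    EReal.coe_nonneg.2 (abs_nonneg _)
  rcases hx.eq_or_lt with h0 | hxpos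
  · -- x = 0
    have hx0 : x ≤ 0 := le_of_eq h0.symm
    have hxv0 : x / v ≤ 0 := div_nonpos_of_nonpos_of_nonneg hx0 hv.le
    have e1 : elog (x / v) = ⊥ := if_pos hxv0
    have e2 : elog x = ⊥ := if_pos hx0
    rw [e1, e2, max_eq_right bot_le]
    constructor <;> · calc (0 : EReal) ≤ ((|Real.log v| : ℝ) : EReal) := habs
                          _ = 0 + ((|Real.log v| : ℝ) : EReal) := (zero_add _).symm
  · -- 0 < x
    have hxv : 0 < x / v := div_pos hxpos hv
    have e1 : elog (x / v) = ((Real.log x - Real.log v : ℝ) : EReal) := by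
      rw [elog, if_neg (not_le.2 hxv), Real.log_div hxpos.ne' hv.ne']
    have e2 : elog x = ((Real.log x : ℝ) : EReal) := if_neg (not_le.2 hxpos)
    rw [e1, e2]
    rw [show (0 : EReal) = ((0 : ℝ) : EReal) from rfl, ← ereal_coe_max, ← ereal_coe_max,
      ← EReal.coe_add, ← EReal.coe_add, EReal.coe_le_coe_iff, EReal.coe_le_coe_iff]
    constructor
    · apply max_le
      · have h1 := le_max_left (Real.log x) 0
        have h2 := neg_abs_le (Real.log v)
        linarith
      · have h1 := le_max_right (Real.log x) 0
        have h2 := abs_nonneg (Real.log v)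
        linarith
    · apply max_le
      · have h1 := le_max_left (Real.log x - Real.log v) 0
        have h2 := le_abs_self (Real.log v)
        linarith
      · have h1 := le_max_right (Real.log x - Real.log v) 0
        have h2 := abs_nonneg (Real.log v)
        linarith

private lemma ereal_mul_add_real (r d : ℝ) (hr : 0 < r) (x : EReal) :
    (r : EReal) * (x + (d : EReal)) = (r : EReal) * x + ((r * d : ℝ) : EReal) := by
  induction x with
  | bot =>
      rw [EReal.bot_add, EReal.coe_mul_bot_of_pos hr, EReal.bot_add]
  | coe x =>
      rw [← EReal.coe_add, ← EReal.coe_mul, ← EReal.coe_mul, ← EReal.coe_add, mul_add]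
  | top =>
      rw [EReal.top_add_coe, EReal.coe_mul_top_of_pos hr, EReal.top_add_coe]

private lemma ereal_le_of_forall_le_add (A B : EReal)
    (h : ∀ ε : ℝ, 0 < ε → A ≤ B + (ε : EReal)) : A ≤ B := by
  by_contra hc
  push_neg at hc
  induction B with
  | bot =>
      have h1 := h 1 one_pos
      rw [EReal.bot_add] at h1
      exact absurd h1 (not_le.2 hc)
  | coe b =>
      obtain ⟨x, hbx, hxA⟩ := EReal.lt_iff_exists_real_btwn.1 hc
      have hbx' : b < x := EReal.coe_lt_coe_iff.1 hbx
      have h1 := h (x - b) (by linarith)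
      rw [← EReal.coe_add] at h1
      have : b + (x - b) = x := by ring
      rw [this] at h1
      exact absurd (h1.trans_lt hxA) (lt_irrefl _)
  | top => exact absurd hc (not_lt.2 le_top)

/-- Key liminf comparison lemma. -/
private lemma liminf_aux (a b : ℕ → EReal) (c : ℝ)
    (h : ∀ T, a T ≤ b T + (c : EReal)) :
    Filter.liminf (fun T : ℕ => (((T : ℝ)⁻¹ : ℝ) : EReal) * a T) Filter.atTop
      ≤ Filter.liminf (fun T : ℕ => (((T : ℝ)⁻¹ : ℝ) : EReal) * b T) Filter.atTop := by
  apply ereal_le_of_forall_le_add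
  intro ε hε
  have hev : ∀ᶠ T : ℕ in atTop, (T : ℝ)⁻¹ * c ≤ ε := by
    have h1 : Tendsto (fun T : ℕ => (T : ℝ)⁻¹ * c) atTop (nhds (0 * c)) :=
      (tendsto_natCast_atTop_atTop (R := ℝ)).inv_tendsto_atTop.mul_const c
    rw [zero_mul] at h1
    exact h1.eventually (eventually_le_nhds hε)
  have hstep : Filter.liminf (fun T : ℕ => (((T : ℝ)⁻¹ : ℝ) : EReal) * a T) Filter.atTop
      ≤ Filter.liminf ((fun _ : ℕ => (ε : EReal)) +
          fun T : ℕ => (((T : ℝ)⁻¹ : ℝ) : EReal) * b T) Filter.atTop := by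
    apply liminf_le_liminf ?_ (by isBoundedDefault) (by isBoundedDefault)
    filter_upwards [hev, eventually_ge_atTop 1] with T hT1 hT2
    have hrpos : (0 : ℝ) < (T : ℝ)⁻¹ := by
      have : (0 : ℝ) < (T : ℝ) := by exact_mod_cast hT2
      positivity
    calc (((T : ℝ)⁻¹ : ℝ) : EReal) * a T
        ≤ (((T : ℝ)⁻¹ : ℝ) : EReal) * (b T + (c : EReal)) :=
          mul_le_mul_of_nonneg_left (h T) (EReal.coe_nonneg.2 hrpos.le)
      _ = (((T : ℝ)⁻¹ : ℝ) : EReal) * b T + (((T : ℝ)⁻¹ * c : ℝ) : EReal) :=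
          ereal_mul_add_real _ _ hrpos _
      _ ≤ (((T : ℝ)⁻¹ : ℝ) : EReal) * b T + (ε : EReal) :=
          add_le_add_right (EReal.coe_le_coe_iff.2 hT1) _
      _ = ((fun _ : ℕ => (ε : EReal)) +
            fun T : ℕ => (((T : ℝ)⁻¹ : ℝ) : EReal) * b T) T := add_comm _ _
  refine hstep.trans ?_
  have h2 := EReal.liminf_add_le
    (u := fun _ : ℕ => (ε : EReal))
    (v := fun T : ℕ => (((T : ℝ)⁻¹ : ℝ) : EReal) * b T) (f := atTop)
    (Or.inl (by rw [limsup_const]; exact EReal.coe_ne_bot ε))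
    (Or.inl (by rw [limsup_const]; exact EReal.coe_ne_top ε))
  rw [limsup_const] at h2
  exact h2.trans_eq (add_comm _ _)

/-- for a dynamic risk measure `{ρₜ}` and `ρ̃ₜ(X) = ρₜ(X⁺)`, for every
`V ∈ 𝕍` with `P[V_t > 0] = 1`:
`liminf_T (-ρₜ([ln(V_T/V_t)]⁺))/T = liminf_T (-ρₜ([ln V_T]⁺))/T` a.s. -/
theorem risk_seeking_enough {Ω : Type*} [m : MeasurableSpace Ω] (P : Measure Ω)
    [IsProbabilityMeasure P] (ℱ : MeasureTheory.Filtration ℕ m)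
    (ρ : ℕ → (Ω → EReal) → Ω → EReal)
    (hmeas : ∀ t X, Measurable[ℱ t] (ρ t X))
    (hmono : ∀ t, ∀ X Y : Ω → EReal, (∀ᵐ ω ∂P, X ω ≤ Y ω) →
      ∀ᵐ ω ∂P, -(ρ t X ω) ≤ -(ρ t Y ω))
    (hnorm : ∀ t, ∀ᵐ ω ∂P, ρ t (fun _ => (0 : EReal)) ω = 0)
    (hcash : ∀ t, ∀ X : Ω → EReal, ∀ c : Ω → EReal, Measurable[ℱ t] c → (∀ ω, c ω ≠ ⊤) →
      ∀ᵐ ω ∂P, -(ρ t (fun ω' => X ω' + c ω') ω) = -(ρ t X ω) + c ω)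
    (hlocal : ∀ t, ∀ A : Set Ω, MeasurableSet[ℱ t] A → ∀ X : Ω → EReal,
      ∀ᵐ ω ∂P, A.indicator (fun ω' => -(ρ t X ω')) ω
        = A.indicator (fun ω' => -(ρ t (A.indicator X) ω')) ω)
    (t : ℕ) (V : ℕ → Ω → ℝ) (hV : MemV ℱ V) (hVt : ∀ᵐ ω ∂P, 0 < V t ω) :
    ∀ᵐ ω ∂P,
      Filter.liminf
        (fun T : ℕ => (((T : ℝ)⁻¹ : ℝ) : EReal)
          * (-(ρ t (fun ω' => max (elog (V T ω' / V t ω')) 0) ω)))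
        Filter.atTop
      = Filter.liminf
        (fun T : ℕ => (((T : ℝ)⁻¹ : ℝ) : EReal)
          * (-(ρ t (fun ω' => max (elog (V T ω')) 0) ω)))
        Filter.atTop := by
  classical
  set c : Ω → EReal := fun ω => ((|Real.log (V t ω)| : ℝ) : EReal) with hc_def
  have hc_meas : Measurable[ℱ t] c :=
    (measurable_coe_real_ereal.comp Real.measurable_log.abs).comp (hV.1 t)
  have hc_ne_top : ∀ ω, c ω ≠ ⊤ := fun ω => EReal.coe_ne_top _
  -- for each T, a.e. inequalities between the two risk evaluations
  have hkey : ∀ T : ℕ, ∀ᵐ ω ∂P,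
      (-(ρ t (fun ω' => max (elog (V T ω' / V t ω')) 0) ω)
          ≤ -(ρ t (fun ω' => max (elog (V T ω')) 0) ω) + c ω) ∧
      (-(ρ t (fun ω' => max (elog (V T ω')) 0) ω)
          ≤ -(ρ t (fun ω' => max (elog (V T ω' / V t ω')) 0) ω) + c ω) := by
    intro T
    set X : Ω → EReal := fun ω' => max (elog (V T ω' / V t ω')) 0 with hX
    set Y : Ω → EReal := fun ω' => max (elog (V T ω')) 0 with hY
    have hle1 : ∀ᵐ ω' ∂P, X ω' ≤ Y ω' + c ω' := by
      filter_upwards [hVt] with ω' hv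
      exact (elog_ineq (V t ω') (V T ω') hv (hV.2.1 T ω')).1
    have hle2 : ∀ᵐ ω' ∂P, Y ω' ≤ X ω' + c ω' := by
      filter_upwards [hVt] with ω' hv
      exact (elog_ineq (V t ω') (V T ω') hv (hV.2.1 T ω')).2
    have hm1 := hmono t X (fun ω' => Y ω' + c ω') hle1
    have hm2 := hmono t Y (fun ω' => X ω' + c ω') hle2
    have hc1 := hcash t Y c hc_meas hc_ne_top
    have hc2 := hcash t X c hc_meas hc_ne_top
    filter_upwards [hm1, hm2, hc1, hc2] with ω h1 h2 h3 h4
    exact ⟨h1.trans_eq h3, h2.trans_eq h4⟩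
  have hAll : ∀ᵐ ω ∂P, ∀ T : ℕ,
      (-(ρ t (fun ω' => max (elog (V T ω' / V t ω')) 0) ω)
          ≤ -(ρ t (fun ω' => max (elog (V T ω')) 0) ω) + c ω) ∧
      (-(ρ t (fun ω' => max (elog (V T ω')) 0) ω)
          ≤ -(ρ t (fun ω' => max (elog (V T ω' / V t ω')) 0) ω) + c ω) :=
    ae_all_iff.2 hkey
  filter_upwards [hAll] with ω hω
  apply le_antisymm
  · exact liminf_aux _ _ (|Real.log (V t ω)|) (fun T => (hω T).1)
  · exact liminf_aux _ _ (|Real.log (V t ω)|) (fun T => (hω T).2)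
end

section
/- Let $\gamma>0$ and $V\in\mathbb{V}$ with $P[V_t>0]=1$. Then $[\varphi^\gamma_t(V)]^+ = \liminf_{T\to\infty}\frac{1}{T}\mu^\gamma_t([\ln(V_T/V_t)]^+)$ a.s., where $\varphi^\gamma_t(V)=\liminf_{T\to\infty}\frac{1}{\gamma T}\ln E[V_T^\gamma\mid\mathcal{F}_t]$ and $\mu^\gamma_t(X)=\frac{1}{\gamma}\ln E[e^{\gamma X}\mid\mathcal{F}_t]$, and $x^+=\max(x,0)$. -/
open MeasureTheory ProbabilityTheory Filter Set
open scoped ENNReal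

/-- The positive part of an extended real, as an extended nonnegative real. -/
noncomputable def epos (x : EReal) : ℝ≥0∞ := if x = ⊤ then ⊤ else ENNReal.ofReal x.toReal

/-- Conditional expectation of an extended-real-valued random variable,
`E[X|ℱₜ] = E[X⁺|ℱₜ] - E[X⁻|ℱₜ]` with the convention `∞ - ∞ = -∞`. -/
noncomputable def erealCondExp {Ω : Type*} [mΩ : MeasurableSpace Ω] [StandardBorelSpace Ω]
    (P : Measure Ω) [IsFiniteMeasure P] (mt : MeasurableSpace Ω) (W : Ω → EReal) : Ω → EReal :=
  fun ω => ((∫⁻ x, epos (W x) ∂(@condExpKernel Ω mΩ _ P _ mt ω) : ℝ≥0∞) : EReal)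
    - ((∫⁻ x, epos (-(W x)) ∂(@condExpKernel Ω mΩ _ P _ mt ω) : ℝ≥0∞) : EReal)

/-- The dynamic monetary entropic utility on `[-∞,∞)`-valued random variables:
`μ^γ_t(W) = (1/γ) ln E[e^{γW}|ℱₜ]` for `γ ≠ 0`, and `μ^0_t(W) = E[W|ℱₜ]`. -/
noncomputable def entropicE {Ω : Type*} [mΩ : MeasurableSpace Ω] [StandardBorelSpace Ω]
    (P : Measure Ω) [IsFiniteMeasure P] (mt : MeasurableSpace Ω) (γ : ℝ) (W : Ω → EReal) :
    Ω → EReal :=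
  if γ = 0 then @erealCondExp Ω mΩ _ P _ mt W
  else fun ω => ((γ⁻¹ : ℝ) : EReal) *
    ENNReal.log (∫⁻ x, EReal.exp ((γ : EReal) * W x) ∂(@condExpKernel Ω mΩ _ P _ mt ω))

/-- The dynamic risk sensitive criterion
`φ^γ_t(V) = liminf_T (1/(γT)) ln E[V_T^γ | ℱₜ]` for `γ ≠ 0` and
`φ^0_t(V) = liminf_T (1/T) E[ln V_T | ℱₜ]` (with `0^γ = ∞` for `γ < 0` and `ln 0 = -∞`). -/
noncomputable def drsc {Ω : Type*} [mΩ : MeasurableSpace Ω] [StandardBorelSpace Ω]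
    (P : Measure Ω) [IsFiniteMeasure P] (ℱ : MeasureTheory.Filtration ℕ mΩ) (γ : ℝ)
    (t : ℕ) (V : ℕ → Ω → ℝ) : Ω → EReal :=
  if γ = 0 then fun ω =>
    Filter.liminf (fun T : ℕ =>
      (((T : ℝ)⁻¹ : ℝ) : EReal) * erealCondExp P (ℱ t) (fun x => elog (V T x)) ω) Filter.atTop
  else fun ω =>
    Filter.liminf (fun T : ℕ =>
      ((((γ * T)⁻¹ : ℝ)) : EReal) *
        ENNReal.log (∫⁻ x, (ENNReal.ofReal (V T x)) ^ γ ∂(@condExpKernel Ω mΩ _ P _ (ℱ t) ω)))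
      Filter.atTop


lemma exp_elog (r : ℝ) : EReal.exp (elog r) = ENNReal.ofReal r := by
  unfold elog
  split_ifs with h
  · simp [ENNReal.ofReal_eq_zero.2 h]
  · rw [EReal.exp_coe, Real.exp_log (lt_of_not_ge h)]

lemma ereal_coe_mul_add (r : ℝ) (hr : 0 ≤ r) (x : EReal) (y : ℝ) :
    (r : EReal) * (x + (y : EReal)) = (r : EReal) * x + ((r * y : ℝ) : EReal) := by
  rcases eq_or_lt_of_le hr with h | h
  · simp [← h]
  induction x with
  | bot => rw [EReal.bot_add, EReal.mul_bot_of_pos (by exact_mod_cast h)]; simp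
  | coe x => norm_cast; ring
  | top => rw [EReal.top_add_coe, EReal.mul_top_of_pos (by exact_mod_cast h)]; exact (EReal.top_add_coe _).symm

lemma ereal_coe_mul_max (r : ℝ) (hr : 0 ≤ r) (x y : EReal) :
    (r : EReal) * max x y = max ((r : EReal) * x) ((r : EReal) * y) := by
  have hmono : Monotone (fun z : EReal => (r : EReal) * z) :=
    fun a b hab => mul_le_mul_of_nonneg_left hab (by exact_mod_cast hr)
  exact hmono.map_max

lemma ereal_mul_nonneg {x y : EReal} (hx : 0 ≤ x) (hy : 0 ≤ y) : 0 ≤ x * y := by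
  have := mul_le_mul_of_nonneg_left hy hx
  simpa using this

/-- Adding a real constant is an order isomorphism of `EReal`. -/
noncomputable def erealAddIso (c : ℝ) : EReal ≃o EReal where
  toFun x := x + (c : EReal)
  invFun x := x - (c : EReal)
  left_inv x := EReal.add_sub_cancel_right
  right_inv x := EReal.sub_add_cancel
  map_rel_iff' := (EReal.addLECancellable_coe c).add_le_add_iff_right

lemma liminf_add_coe (u : ℕ → EReal) (c : ℝ) :
    Filter.liminf (fun T => u T + (c : EReal)) Filter.atTop
      = Filter.liminf u Filter.atTop + (c : EReal) :=
  ((erealAddIso c).liminf_apply).symm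

lemma liminf_max_const (u : ℕ → EReal) (c : EReal) :
    Filter.liminf (fun T => max (u T) c) Filter.atTop
      = max (Filter.liminf u Filter.atTop) c := by
  apply le_antisymm
  · refine le_of_not_gt fun h => ?_
    obtain ⟨y, hy1, hy2⟩ := exists_between h
    have h1 : ∃ᶠ T in Filter.atTop, u T < y :=
      Filter.frequently_lt_of_liminf_lt (by isBoundedDefault) (lt_of_le_of_lt (le_max_left _ _) hy1)
    have h2 : (c : EReal) < y := lt_of_le_of_lt (le_max_right _ _) hy1
    have : ∃ᶠ T in Filter.atTop, max (u T) c ≤ y :=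
      h1.mono fun T hT => max_le hT.le h2.le
    exact absurd (Filter.liminf_le_of_frequently_le this) (not_le.2 hy2)
  · refine max_le ?_ ?_
    · exact Filter.liminf_le_liminf (Filter.Eventually.of_forall fun T => le_max_left _ _)
    · refine Filter.le_liminf_of_le (by isBoundedDefault)
        (Filter.Eventually.of_forall fun T => le_max_right _ _)

lemma ereal_le_of_forall_le_add_s17 {x y : EReal} (hy : y ≠ ⊥)
    (h : ∀ ε : ℝ, 0 < ε → x ≤ y + (ε : EReal)) : x ≤ y := by
  induction y with
  | bot => exact absurd rfl hy
  | coe y =>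
    induction x with
    | bot => exact bot_le
    | coe x =>
      have : ∀ ε : ℝ, 0 < ε → x ≤ y + ε := fun ε hε => by exact_mod_cast h ε hε
      exact_mod_cast le_of_forall_pos_le_add this
    | top =>
      exfalso
      have := h 1 one_pos
      simp only [top_le_iff, ← EReal.coe_one, ← EReal.coe_add] at this
      exact EReal.coe_ne_top _ this
  | top => exact le_top

lemma liminf_eq_of_eps (u v : ℕ → EReal)
    (h0 : ∀ᶠ T in Filter.atTop, 0 ≤ v T)
    (h1 : ∀ ε : ℝ, 0 < ε → ∀ᶠ T in Filter.atTop, max (u T) 0 ≤ v T + (ε : EReal))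
    (h2 : ∀ ε : ℝ, 0 < ε → ∀ᶠ T in Filter.atTop, v T ≤ max (u T) 0 + (ε : EReal)) :
    max (Filter.liminf u Filter.atTop) 0 = Filter.liminf v Filter.atTop := by
  have hv0 : (0 : EReal) ≤ Filter.liminf v Filter.atTop :=
    Filter.le_liminf_of_le (by isBoundedDefault) h0
  have hu0 : (0 : EReal) ≤ max (Filter.liminf u Filter.atTop) 0 := le_max_right _ _
  rw [← liminf_max_const u 0]
  apply le_antisymm
  · refine ereal_le_of_forall_le_add_s17 (fun hbot => by simp [hbot] at hv0) fun ε hε => ?_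
    calc Filter.liminf (fun T => max (u T) 0) Filter.atTop
        ≤ Filter.liminf (fun T => v T + (ε : EReal)) Filter.atTop :=
          Filter.liminf_le_liminf (h1 ε hε)
      _ = Filter.liminf v Filter.atTop + (ε : EReal) := liminf_add_coe v ε
  · refine ereal_le_of_forall_le_add_s17 (fun hbot => by rw [liminf_max_const] at hbot; simp [hbot] at hu0) fun ε hε => ?_
    calc Filter.liminf v Filter.atTop
        ≤ Filter.liminf (fun T => max (u T) 0 + (ε : EReal)) Filter.atTop :=
          Filter.liminf_le_liminf (h2 ε hε)
      _ = Filter.liminf (fun T => max (u T) 0) Filter.atTop + (ε : EReal) :=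
          liminf_add_coe _ ε

lemma condexpKernel_ae_eq_self {Ω : Type*} {m : MeasurableSpace Ω} [mΩ : MeasurableSpace Ω]
    [StandardBorelSpace Ω] (P : Measure Ω) [IsProbabilityMeasure P] (hm : m ≤ mΩ)
    (g : Ω → ℝ) (hg : Measurable[m] g) :
    ∀ᵐ ω ∂P, ∀ᵐ x ∂((@condExpKernel Ω mΩ _ P _ m ω)), g x = g ω := by
  set s : ℚ → Set Ω := fun q => {x | g x < (q : ℝ)} with hs_def
  have hs_m : ∀ q, MeasurableSet[m] (s q) := fun q => hg measurableSet_Iio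
  have hs : ∀ q, MeasurableSet[mΩ] (s q) := fun q => hm _ (hs_m q)
  have hcond : ∀ q : ℚ, ∀ᵐ ω ∂P,
      ((@condExpKernel Ω mΩ _ P _ m ω) (s q)).toReal = (s q).indicator (fun _ => (1:ℝ)) ω := by
    intro q
    have h1 := @condExpKernel_ae_eq_condExp Ω m mΩ _ P _ hm (s q) (hs q)
    have h2 : P[(s q).indicator (fun _ => (1:ℝ)) | m] = (s q).indicator (fun _ => (1:ℝ)) :=
      condExp_of_stronglyMeasurable hm (stronglyMeasurable_const.indicator (hs_m q))
        ((integrable_const (1:ℝ)).indicator (hs q))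
    filter_upwards [h1] with ω hω
    change (@condExpKernel Ω mΩ _ P _ m ω).real (s q) = _
    rw [hω, h2]
  rw [← ae_all_iff] at hcond
  filter_upwards [hcond] with ω hω
  have hker : ∀ q : ℚ, (@condExpKernel Ω mΩ _ P _ m ω)
      (if g ω < (q : ℝ) then (s q)ᶜ else s q) = 0 := by
    intro q
    split_ifs with hq
    · have h3 : ((@condExpKernel Ω mΩ _ P _ m ω) (s q)).toReal = 1 := by
        rw [hω q, Set.indicator_of_mem (show ω ∈ s q from hq)]
      have h1 : (@condExpKernel Ω mΩ _ P _ m ω) (s q) = 1 := by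
        rwa [ENNReal.toReal_eq_one_iff] at h3
      exact (prob_compl_eq_zero_iff (hs q)).2 h1
    · have h3 : ((@condExpKernel Ω mΩ _ P _ m ω) (s q)).toReal = 0 := by
        rw [hω q, Set.indicator_of_notMem (show ω ∉ s q from hq)]
      rw [ENNReal.toReal_eq_zero_iff] at h3
      exact h3.resolve_right (measure_ne_top _ _)
  have hsub : {x | ¬ g x = g ω} ⊆
      ⋃ q : ℚ, (if g ω < (q : ℝ) then (s q)ᶜ else s q) := by
    intro x hx
    rcases lt_or_gt_of_ne (hx : g x ≠ g ω) with h | h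
    · obtain ⟨q, hq1, hq2⟩ := exists_rat_btwn h
      refine Set.mem_iUnion.2 ⟨q, ?_⟩
      rw [if_neg (not_lt.2 hq2.le)]
      exact hq1
    · obtain ⟨q, hq1, hq2⟩ := exists_rat_btwn h
      refine Set.mem_iUnion.2 ⟨q, ?_⟩
      rw [if_pos hq1]
      exact not_lt.2 hq2.le
  rw [ae_iff]
  exact measure_mono_null hsub (measure_iUnion_null fun q => hker q)

lemma exp_gamma_max (γ : ℝ) (hγ : 0 ≤ γ) (v c : ℝ) (hv : 0 ≤ v) (hc : 0 < c) :
    EReal.exp ((γ : EReal) * max (elog (v / c)) 0)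
      = ((ENNReal.ofReal c) ^ γ)⁻¹ * (max (ENNReal.ofReal v) (ENNReal.ofReal c)) ^ γ := by
  have hC0 : ENNReal.ofReal c ≠ 0 := by simp [hc]
  have hCt : ENNReal.ofReal c ≠ ⊤ := ENNReal.ofReal_ne_top
  have hmono : Monotone EReal.exp := EReal.exp_monotone
  have hdiv : Monotone (fun z : ℝ≥0∞ => z / ENNReal.ofReal c) :=
    fun a b hab => ENNReal.div_le_div_right hab _
  calc EReal.exp ((γ : EReal) * max (elog (v / c)) 0)
      = EReal.exp (max (elog (v / c)) 0 * (γ : EReal)) := by rw [EReal.mul_comm]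
    _ = EReal.exp (max (elog (v / c)) 0) ^ γ := EReal.exp_mul _ γ
    _ = (max (EReal.exp (elog (v / c))) (EReal.exp 0)) ^ γ := by rw [hmono.map_max]
    _ = (max (ENNReal.ofReal (v / c)) 1) ^ γ := by rw [exp_elog, EReal.exp_zero]
    _ = (max (ENNReal.ofReal v / ENNReal.ofReal c)
          (ENNReal.ofReal c / ENNReal.ofReal c)) ^ γ := by
        rw [ENNReal.ofReal_div_of_pos hc, ENNReal.div_self hC0 hCt]
    _ = ((max (ENNReal.ofReal v) (ENNReal.ofReal c)) / ENNReal.ofReal c) ^ γ := by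
        rw [hdiv.map_max]
    _ = (max (ENNReal.ofReal v) (ENNReal.ofReal c)) ^ γ / (ENNReal.ofReal c) ^ γ := by
        rw [ENNReal.div_rpow_of_nonneg _ _ hγ]
    _ = ((ENNReal.ofReal c) ^ γ)⁻¹ * (max (ENNReal.ofReal v) (ENNReal.ofReal c)) ^ γ := by
        rw [div_eq_mul_inv, mul_comm]

/-- for `γ > 0` and `V ∈ 𝕍` with `P[V_t > 0] = 1`,
`[φ^γ_t(V)]⁺ = liminf_T (1/T) μ^γ_t([ln(V_T/V_t)]⁺)` a.s., where `x⁺ = max(x,0)`. -/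
theorem drsc_pos_part {Ω : Type*} [m : MeasurableSpace Ω] [StandardBorelSpace Ω]
    (P : Measure Ω) [IsProbabilityMeasure P] (ℱ : MeasureTheory.Filtration ℕ m)
    (γ : ℝ) (hγ : 0 < γ) (t : ℕ) (V : ℕ → Ω → ℝ) (hV : MemV ℱ V)
    (hVt : ∀ᵐ ω ∂P, 0 < V t ω) :
    ∀ᵐ ω ∂P, max (drsc P ℱ γ t V ω) 0 =
      Filter.liminf (fun T : ℕ =>
        (((T : ℝ)⁻¹ : ℝ) : EReal) *
          entropicE P (ℱ t) γ (fun x => max (elog (V T x / V t x)) 0) ω) Filter.atTop := by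
  classical
  have hγ0 : γ ≠ 0 := ne_of_gt hγ
  have hδ0 : ∀ T : ℕ, 0 ≤ (γ * (T : ℝ))⁻¹ :=
    fun T => inv_nonneg.2 (mul_nonneg hγ.le (Nat.cast_nonneg T))
  have hδtend : Filter.Tendsto (fun T : ℕ => (γ * (T : ℝ))⁻¹) Filter.atTop (nhds 0) := by
    have h := tendsto_inv_atTop_nhds_zero_nat.mul_const γ⁻¹
    rw [zero_mul] at h
    exact h.congr fun T => (mul_inv_rev γ (T : ℝ)).symm
  have hsmall : ∀ K ε : ℝ, 0 < ε → ∀ᶠ (T : ℕ) in Filter.atTop, (γ * (T : ℝ))⁻¹ * K < ε := by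
    intro K ε hε
    have h := hδtend.mul_const K
    rw [zero_mul] at h
    exact h.eventually_lt_const hε
  filter_upwards [hVt, condexpKernel_ae_eq_self P (ℱ.le t) (V t) (hV.1 t)] with ω hc hκae
  simp only [drsc, entropicE, if_neg hγ0]
  set κ : Measure Ω := @condExpKernel Ω m _ P _ (ℱ t) ω with hκdef
  haveI hκprob : IsProbabilityMeasure κ := by rw [hκdef]; infer_instance
  set c := V t ω with hcdef
  set C := ENNReal.ofReal c with hCdef
  set k := γ * Real.log c with hkdef
  have hCpos : 0 < C := ENNReal.ofReal_pos.2 hc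
  have hCt : C ≠ ⊤ := ENNReal.ofReal_ne_top
  have hCγ0 : C ^ γ ≠ 0 := (ENNReal.rpow_pos hCpos hCt).ne'
  have hCγt : C ^ γ ≠ ⊤ := ENNReal.rpow_ne_top_of_nonneg hγ.le hCt
  have hlogCγ : ENNReal.log (C ^ γ) = ((k : ℝ) : EReal) := by
    rw [ENNReal.log_rpow, hCdef, ENNReal.log_ofReal_of_pos hc, ← EReal.coe_mul, hkdef]
  set A : ℕ → ℝ≥0∞ := fun T => ∫⁻ x, ENNReal.ofReal (V T x) ^ γ ∂κ with hAdef
  set B : ℕ → ℝ≥0∞ := fun T => ∫⁻ x, (max (ENNReal.ofReal (V T x)) C) ^ γ ∂κ with hBdef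
  -- rewrite the RHS sequence
  have hint : ∀ T : ℕ, (∫⁻ x, EReal.exp ((γ : EReal) * max (elog (V T x / V t x)) 0) ∂κ)
      = (C ^ γ)⁻¹ * B T := by
    intro T
    rw [hBdef]
    rw [← lintegral_const_mul' _ _ (ENNReal.inv_ne_top.2 hCγ0)]
    refine lintegral_congr_ae (hκae.mono fun x hx => ?_)
    simp only [hx]
    exact exp_gamma_max γ hγ.le (V T x) c (hV.2.1 T x) hc
  have hRHS : ∀ T : ℕ,
      ((((T : ℝ)⁻¹ : ℝ)) : EReal) * (((γ⁻¹ : ℝ) : EReal)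
        * ENNReal.log (∫⁻ x, EReal.exp ((γ : EReal) * max (elog (V T x / V t x)) 0) ∂κ))
      = (((γ * (T : ℝ))⁻¹ : ℝ) : EReal) * (((-k : ℝ) : EReal) + ENNReal.log (B T)) := by
    intro T
    rw [hint T, ENNReal.log_mul_add, ENNReal.log_inv, hlogCγ, ← mul_assoc, ← EReal.coe_mul,
      ← EReal.coe_neg, mul_inv_rev]
  -- basic inequalities between A, B, C
  have hBA : ∀ T, A T ≤ B T := fun T =>
    lintegral_mono fun x => ENNReal.rpow_le_rpow (le_max_left _ _) hγ.le
  have hBC : ∀ T, C ^ γ ≤ B T := by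
    intro T
    calc C ^ γ = ∫⁻ _, C ^ γ ∂κ := by rw [lintegral_const, measure_univ, mul_one]
      _ ≤ B T := lintegral_mono fun x => ENNReal.rpow_le_rpow (le_max_right _ _) hγ.le
  have hBsum : ∀ T, B T ≤ A T + C ^ γ := by
    intro T
    calc B T ≤ ∫⁻ x, (ENNReal.ofReal (V T x) ^ γ + C ^ γ) ∂κ := by
          refine lintegral_mono fun x => ?_
          rcases le_total (ENNReal.ofReal (V T x)) C with h | h
          · rw [max_eq_right h]; exact le_add_self
          · rw [max_eq_left h]; exact le_self_add
      _ = A T + C ^ γ := by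
          rw [lintegral_add_right _ measurable_const, lintegral_const, measure_univ, mul_one]
  have hMk : ∀ T, ((k : ℝ) : EReal) ≤ ENNReal.log (B T) := fun T => hlogCγ ▸ ENNReal.log_monotone (hBC T)
  have hX0 : ∀ T, (0 : EReal) ≤ ((-k : ℝ) : EReal) + ENNReal.log (B T) := by
    intro T
    have h := add_le_add_right (hMk T) (((-k : ℝ) : EReal))
    rw [← EReal.coe_add, neg_add_cancel] at h
    exact_mod_cast h
  have hLM : ∀ T, ENNReal.log (A T) ≤ ENNReal.log (B T) := fun T => ENNReal.log_monotone (hBA T)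
  have hXM : ∀ T, (((-k : ℝ) : EReal) + ENNReal.log (B T)) + ((k : ℝ) : EReal) = ENNReal.log (B T) := by
    intro T
    rw [add_comm (((-k : ℝ) : EReal)) (ENNReal.log (B T)), add_assoc, ← EReal.coe_add, neg_add_cancel]
    simp
  have hMlog2 : ∀ T, ENNReal.log (B T) ≤ ((Real.log 2 : ℝ) : EReal) + max (ENNReal.log (A T)) ((k : ℝ) : EReal) := by
    intro T
    calc ENNReal.log (B T) ≤ ENNReal.log (A T + C ^ γ) := ENNReal.log_monotone (hBsum T)
      _ ≤ ENNReal.log (2 * max (A T) (C ^ γ)) := by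
          refine ENNReal.log_monotone ?_
          rw [two_mul]
          exact add_le_add (le_max_left _ _) (le_max_right _ _)
      _ = ((Real.log 2 : ℝ) : EReal) + max (ENNReal.log (A T)) ((k : ℝ) : EReal) := by
          rw [ENNReal.log_mul_add, ENNReal.log_monotone.map_max, hlogCγ,
            (by norm_num : (2 : ℝ≥0∞) = ENNReal.ofReal 2), ENNReal.log_ofReal_of_pos two_pos]
  -- apply the liminf lemma
  rw [Filter.liminf_congr (Filter.Eventually.of_forall hRHS)]
  refine liminf_eq_of_eps _ _ ?_ ?_ ?_
  · exact Filter.Eventually.of_forall fun T =>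
      ereal_mul_nonneg (EReal.coe_nonneg.2 (hδ0 T)) (hX0 T)
  · intro ε hε
    filter_upwards [hsmall |k| ε hε] with T hT
    set δ := (γ * (T : ℝ))⁻¹ with hδdef
    have hδk : δ * k ≤ ε := le_of_lt (lt_of_le_of_lt
      (mul_le_mul_of_nonneg_left (le_abs_self k) (hδ0 T)) hT)
    have hb0 : (0 : EReal) ≤ (δ : EReal) * (((-k : ℝ) : EReal) + ENNReal.log (B T)) :=
      ereal_mul_nonneg (EReal.coe_nonneg.2 (hδ0 T)) (hX0 T)
    refine max_le ?_ ?_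
    · calc (δ : EReal) * ENNReal.log (A T) ≤ (δ : EReal) * ENNReal.log (B T) :=
            mul_le_mul_of_nonneg_left (hLM T) (EReal.coe_nonneg.2 (hδ0 T))
        _ = (δ : EReal) * ((((-k : ℝ) : EReal) + ENNReal.log (B T)) + ((k : ℝ) : EReal)) := by rw [hXM T]
        _ = (δ : EReal) * (((-k : ℝ) : EReal) + ENNReal.log (B T)) + ((δ * k : ℝ) : EReal) :=
            ereal_coe_mul_add δ (hδ0 T) _ k
        _ ≤ (δ : EReal) * (((-k : ℝ) : EReal) + ENNReal.log (B T)) + ((ε : ℝ) : EReal) :=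
            add_le_add_right (EReal.coe_le_coe_iff.2 hδk) _
    · exact le_trans hb0 (le_add_of_nonneg_right (EReal.coe_nonneg.2 hε.le))
  · intro ε hε
    filter_upwards [hsmall (|k| + |Real.log 2 - k|) ε hε] with T hT
    set δ := (γ * (T : ℝ))⁻¹ with hδdef
    have hδabs : δ * |k| + δ * |Real.log 2 - k| ≤ ε := by
      rw [← mul_add]; exact hT.le
    have step2 : ((-k : ℝ) : EReal) + ENNReal.log (B T)
        ≤ max (ENNReal.log (A T)) ((k : ℝ) : EReal) + ((Real.log 2 - k : ℝ) : EReal) := by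
      calc ((-k : ℝ) : EReal) + ENNReal.log (B T)
          ≤ ((-k : ℝ) : EReal) + (((Real.log 2 : ℝ) : EReal) + max (ENNReal.log (A T)) ((k : ℝ) : EReal)) :=
            add_le_add_right (hMlog2 T) _
        _ = max (ENNReal.log (A T)) ((k : ℝ) : EReal) + ((Real.log 2 - k : ℝ) : EReal) := by
            rw [← add_assoc, add_comm]
            congr 1
            rw [sub_eq_add_neg, add_comm, EReal.coe_neg]
            norm_cast
    calc (δ : EReal) * (((-k : ℝ) : EReal) + ENNReal.log (B T))
        ≤ (δ : EReal) * (max (ENNReal.log (A T)) ((k : ℝ) : EReal) + ((Real.log 2 - k : ℝ) : EReal)) :=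
          mul_le_mul_of_nonneg_left step2 (EReal.coe_nonneg.2 (hδ0 T))
      _ = (δ : EReal) * max (ENNReal.log (A T)) ((k : ℝ) : EReal) + ((δ * (Real.log 2 - k) : ℝ) : EReal) :=
          ereal_coe_mul_add δ (hδ0 T) _ _
      _ = max ((δ : EReal) * ENNReal.log (A T)) ((δ : EReal) * ((k : ℝ) : EReal))
            + ((δ * (Real.log 2 - k) : ℝ) : EReal) := by
          rw [ereal_coe_mul_max δ (hδ0 T)]
      _ ≤ (max ((δ : EReal) * ENNReal.log (A T)) 0 + ((δ * |k| : ℝ) : EReal))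
            + ((δ * |Real.log 2 - k| : ℝ) : EReal) := by
          refine add_le_add ?_ (EReal.coe_le_coe_iff.2
            (mul_le_mul_of_nonneg_left (le_abs_self _) (hδ0 T)))
          refine max_le ?_ ?_
          · exact le_trans (le_max_left _ 0)
              (le_add_of_nonneg_right (EReal.coe_nonneg.2 (mul_nonneg (hδ0 T) (abs_nonneg k))))
          · refine le_trans (le_of_eq (EReal.coe_mul δ k).symm) (le_trans (EReal.coe_le_coe_iff.2
              (mul_le_mul_of_nonneg_left (le_abs_self k) (hδ0 T))) ?_)
            exact le_add_of_nonneg_left (le_max_right _ 0)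
      _ = max ((δ : EReal) * ENNReal.log (A T)) 0 + ((δ * |k| + δ * |Real.log 2 - k| : ℝ) : EReal) := by
          rw [add_assoc, ← EReal.coe_add]
      _ ≤ max ((δ : EReal) * ENNReal.log (A T)) 0 + ((ε : ℝ) : EReal) :=
          add_le_add_right (EReal.coe_le_coe_iff.2 hδabs) _
end

section
/- Let $\gamma>0$ and let $V$ be an adapted process with $V_t>0$ and $\ln V_t$ integrable for each $t$. Then the process $\varphi^\gamma_t(V)=\liminf_{T\to\infty}E[V_T^\gamma\mid\mathcal{F}_t]^{1/(\gamma T)}$ (in log form, $\liminf_{T\to\infty}\frac{1}{\gamma T}\ln E[V_T^\gamma\mid\mathcal{F}_t]$) is supermartingale time consistent: for $s>t\ge0$ and any $\mathcal{F}_s$-measurable extended-real $m_s$, if $\varphi^\gamma_s(V)\ge m_s$ a.s. then $\varphi^\gamma_t(V)\ge E[m_s\mid\mathcal{F}_t]$ a.s. -/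
open MeasureTheory ProbabilityTheory Filter Set
open scoped ENNReal

/-- Membership in `𝕍̃`: strictly positive adapted processes with integrable logarithm. -/
def MemVtilde {Ω : Type*} [m : MeasurableSpace Ω] (ℱ : MeasureTheory.Filtration ℕ m)
    (P : Measure Ω) (V : ℕ → Ω → ℝ) : Prop :=
  (∀ t, Measurable[ℱ t] (V t)) ∧ (∀ t ω, 0 < V t ω) ∧
    (∀ t, MeasureTheory.Integrable (fun ω => Real.log (V t ω)) P)

section Aux


variable {Ω : Type*} [mΩ : MeasurableSpace Ω] [StandardBorelSpace Ω]
  (P : Measure Ω) [IsFiniteMeasure P]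

/-- sub-σ-algebras bundled with the proof they are smaller than the ambient one. -/
abbrev SubSigma (Ω : Type*) (mΩ : MeasurableSpace Ω) := {m : MeasurableSpace Ω // m ≤ mΩ}

noncomputable def cek (m : SubSigma Ω mΩ) : @ProbabilityTheory.Kernel Ω Ω m.1 mΩ :=
  @condExpKernel Ω mΩ _ P _ m.1

instance (m : SubSigma Ω mΩ) : IsMarkovKernel (cek P m) := by
  unfold cek; infer_instance

instance (m : SubSigma Ω mΩ) (ω : Ω) : IsProbabilityMeasure (cek P m ω) := by
  unfold cek; infer_instance

lemma cek_null (m : SubSigma Ω mΩ) {A : Set Ω}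
    (hA : MeasurableSet[mΩ] A) (h : P A = 0) :
    ∀ᵐ ω ∂P, cek P m ω A = 0 := by
  have h1 : (fun ω => (cek P m ω A).toReal) =ᵐ[P] P⟦A|m.1⟧ :=
    condExpKernel_ae_eq_condExp (m := m.1) (mΩ := mΩ) (μ := P) m.2 hA
  have h2 : P⟦A|m.1⟧ =ᵐ[P] 0 := by
    have hind : (A.indicator (fun _ => (1:ℝ))) =ᵐ[P] 0 := by
      refine (indicator_ae_eq_zero).2 ?_
      exact measure_mono_null (fun x hx => hx.1) h
    calc P⟦A|m.1⟧ =ᵐ[P] P[(0 : Ω → ℝ)|m.1] := condExp_congr_ae hind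
      _ = 0 := condExp_zero
  filter_upwards [h1.trans h2] with ω hω
  have hfin : cek P m ω A ≠ ∞ := (measure_lt_top (cek P m ω) A).ne
  simpa [ENNReal.toReal_eq_zero_iff, hfin] using hω

lemma cek_ae_of_ae (m : SubSigma Ω mΩ) {p : Ω → Prop}
    (h : ∀ᵐ x ∂P, p x) :
    ∀ᵐ ω ∂P, ∀ᵐ x ∂(cek P m ω), p x := by
  obtain ⟨A, hsub, hA, hA0⟩ := exists_measurable_superset_of_null h
  filter_upwards [cek_null P m hA hA0] with ω hω
  exact measure_mono_null hsub hω


lemma cek_lintegral_measurable (m : SubSigma Ω mΩ) {f : Ω → ℝ≥0∞} (hf : Measurable[mΩ] f) :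
    Measurable[mΩ] fun x => ∫⁻ y, f y ∂(cek P m x) := by
  have h1 : Measurable[m.1] fun x => ∫⁻ y, f y ∂(cek P m x) :=
    Measurable.lintegral_kernel_prod_right' (f := fun p : Ω × Ω => f p.2)
      (hf.comp measurable_snd)
  exact h1.mono m.2 le_rfl

lemma cek_tower (mt ms : SubSigma Ω mΩ) (hts : mt.1 ≤ ms.1)
    {f : Ω → ℝ≥0∞} (hf : Measurable[mΩ] f) :
    ∀ᵐ ω ∂P, ∫⁻ x, f x ∂(cek P mt ω)
      = ∫⁻ x, (∫⁻ y, f y ∂(cek P ms x)) ∂(cek P mt ω) := by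
  have key : ∀ n : ℕ, ∀ᵐ ω ∂P,
      ∫⁻ x, min (f x) n ∂(cek P mt ω)
        = ∫⁻ x, (∫⁻ y, min (f y) n ∂(cek P ms x)) ∂(cek P mt ω) := by
    intro n
    set fn : Ω → ℝ≥0∞ := fun x => min (f x) n with hfn
    have hfnm : Measurable fn := hf.min measurable_const
    have hfnle : ∀ x, fn x ≤ n := fun x => min_le_right _ _
    have hfnlt : ∀ x, fn x < ∞ := fun x =>
      lt_of_le_of_lt (hfnle x) (ENNReal.natCast_lt_top n)
    set h : Ω → ℝ := fun x => (fn x).toReal with hh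
    have hhm : Measurable h := hfnm.ennreal_toReal
    have hbound : ∀ x, ‖h x‖ ≤ (n : ℝ) := by
      intro x
      rw [Real.norm_eq_abs, abs_of_nonneg ENNReal.toReal_nonneg]
      exact ENNReal.toReal_le_of_le_ofReal (by positivity) (by simpa using hfnle x)
    have hinth : Integrable h P :=
      ⟨hhm.aestronglyMeasurable, HasFiniteIntegral.of_bounded (ae_of_all _ hbound)⟩
    have hconv : ∀ μ : Measure Ω, ∫ x, h x ∂μ = (∫⁻ x, fn x ∂μ).toReal := fun μ =>
      integral_toReal hfnm.aemeasurable (ae_of_all _ hfnlt)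
    set G : Ω → ℝ≥0∞ := fun x => ∫⁻ y, fn y ∂(cek P ms x) with hG
    have hGm : Measurable[mΩ] G := cek_lintegral_measurable P ms hfnm
    have hGle : ∀ x, G x ≤ n := by
      intro x
      calc G x ≤ ∫⁻ _, (n : ℝ≥0∞) ∂(cek P ms x) := lintegral_mono hfnle
        _ = n := by simp
    set g : Ω → ℝ := fun x => ∫ y, h y ∂(cek P ms x) with hg
    have hg_eq : ∀ x, g x = (G x).toReal := fun x => hconv _
    have hgm : Measurable g := by
      have := hGm.ennreal_toReal
      simpa [funext hg_eq] using this
    have hintg : Integrable g P := by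
      refine ⟨hgm.aestronglyMeasurable, HasFiniteIntegral.of_bounded (C := (n:ℝ))
        (ae_of_all _ fun x => ?_)⟩
      rw [hg_eq x, Real.norm_eq_abs, abs_of_nonneg ENNReal.toReal_nonneg]
      exact ENNReal.toReal_le_of_le_ofReal (by positivity) (by simpa using hGle x)
    have e1 : P[h|mt.1] =ᵐ[P] fun ω => ∫ y, h y ∂(cek P mt ω) :=
      condExp_ae_eq_integral_condExpKernel (m := mt.1) (mΩ := mΩ) (μ := P) mt.2 hinth
    have e2 : P[h|ms.1] =ᵐ[P] g :=
      condExp_ae_eq_integral_condExpKernel (m := ms.1) (mΩ := mΩ) (μ := P) ms.2 hinth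
    have e3 : P[g|mt.1] =ᵐ[P] P[P[h|ms.1]|mt.1] := condExp_congr_ae e2.symm
    have e4 : P[P[h|ms.1]|mt.1] =ᵐ[P] P[h|mt.1] := condExp_condExp_of_le hts ms.2
    have e5 : P[g|mt.1] =ᵐ[P] fun ω => ∫ y, g y ∂(cek P mt ω) :=
      condExp_ae_eq_integral_condExpKernel (m := mt.1) (mΩ := mΩ) (μ := P) mt.2 hintg
    filter_upwards [e1, e3, e4, e5] with ω h1 h3 h4 h5
    have heq : ∫ y, h y ∂(cek P mt ω) = ∫ y, g y ∂(cek P mt ω) := by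
      rw [← h1, ← h4, ← h3, h5]
    have hRHS : ∫ y, g y ∂(cek P mt ω) = (∫⁻ x, G x ∂(cek P mt ω)).toReal := by
      rw [funext hg_eq]
      exact integral_toReal hGm.aemeasurable
        (ae_of_all _ fun x => lt_of_le_of_lt (hGle x) (ENNReal.natCast_lt_top n))
    rw [hconv, hRHS] at heq
    have hne1 : ∫⁻ x, fn x ∂(cek P mt ω) ≠ ∞ := by
      refine ne_of_lt (lt_of_le_of_lt ?_ (ENNReal.natCast_lt_top n))
      calc ∫⁻ x, fn x ∂(cek P mt ω) ≤ ∫⁻ _, (n:ℝ≥0∞) ∂(cek P mt ω) := lintegral_mono hfnle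
        _ = n := by simp
    have hne2 : ∫⁻ x, G x ∂(cek P mt ω) ≠ ∞ := by
      refine ne_of_lt (lt_of_le_of_lt ?_ (ENNReal.natCast_lt_top n))
      calc ∫⁻ x, G x ∂(cek P mt ω) ≤ ∫⁻ _, (n:ℝ≥0∞) ∂(cek P mt ω) := lintegral_mono hGle
        _ = n := by simp
    exact (ENNReal.toReal_eq_toReal_iff' hne1 hne2).mp heq
  rw [← ae_all_iff] at key
  filter_upwards [key] with ω hω
  have hmin_mono : ∀ x : Ω, Monotone fun n : ℕ => min (f x) (n : ℝ≥0∞) :=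
    fun x i j hij => min_le_min le_rfl (by exact_mod_cast Nat.cast_le.2 hij)
  have hsup : ∀ x : Ω, (⨆ n : ℕ, min (f x) (n : ℝ≥0∞)) = f x := by
    intro x
    refine le_antisymm (iSup_le fun n => min_le_left _ _) ?_
    rcases eq_top_or_lt_top (f x) with htop | hlt
    · rw [htop]
      have : (⨆ n : ℕ, min (⊤ : ℝ≥0∞) (n : ℝ≥0∞)) = ⨆ n : ℕ, (n : ℝ≥0∞) := by
        simp [min_eq_right]
      rw [this, ENNReal.iSup_natCast]
    · obtain ⟨n, hn⟩ := ENNReal.exists_nat_gt hlt.ne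
      exact le_iSup_of_le n (le_min le_rfl hn.le)
  have hL : ∫⁻ x, f x ∂(cek P mt ω) = ⨆ n : ℕ, ∫⁻ x, min (f x) (n:ℝ≥0∞) ∂(cek P mt ω) := by
    rw [← lintegral_iSup (fun n => hf.min measurable_const) (fun i j hij x => hmin_mono x hij)]
    exact lintegral_congr fun x => (hsup x).symm
  have hInner : ∀ x : Ω, ∫⁻ y, f y ∂(cek P ms x)
      = ⨆ n : ℕ, ∫⁻ y, min (f y) (n:ℝ≥0∞) ∂(cek P ms x) := by
    intro x
    rw [← lintegral_iSup (fun n => hf.min measurable_const) (fun i j hij y => hmin_mono y hij)]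
    exact lintegral_congr fun y => (hsup y).symm
  have hR : ∫⁻ x, (∫⁻ y, f y ∂(cek P ms x)) ∂(cek P mt ω)
      = ⨆ n : ℕ, ∫⁻ x, (∫⁻ y, min (f y) (n:ℝ≥0∞) ∂(cek P ms x)) ∂(cek P mt ω) := by
    rw [← lintegral_iSup (fun n => cek_lintegral_measurable P ms (hf.min measurable_const))
      (fun i j hij x => lintegral_mono fun y => hmin_mono y hij)]
    exact lintegral_congr fun x => by rw [← hInner x]
  rw [hL, hR]
  exact iSup_congr hω

lemma lintegral_rpow_le_rpow_lintegral (μ : Measure Ω) [IsProbabilityMeasure μ]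
    {g : Ω → ℝ≥0∞} (hg : AEMeasurable g μ) {p : ℝ} (hp : 0 < p) (hp1 : p < 1) :
    ∫⁻ x, (g x) ^ p ∂μ ≤ (∫⁻ x, g x ∂μ) ^ p := by
  have hpq : (1/p).HolderConjugate (1/(1-p)) := by
    rw [Real.holderConjugate_iff]
    constructor
    · rw [lt_div_iff₀ hp]; linarith
    · rw [one_div, one_div, inv_inv, inv_inv]; ring
  have hgp : AEMeasurable (fun x => (g x) ^ p) μ := hg.pow_const p
  have H := ENNReal.lintegral_mul_le_Lp_mul_Lq μ hpq (f := fun x => (g x)^p)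
    (g := fun _ => 1) hgp aemeasurable_const
  have hgg : ∀ a : Ω, ((g a ^ p) ^ (p⁻¹ : ℝ) : ℝ≥0∞) = g a := fun a => by
    rw [← ENNReal.rpow_mul, mul_inv_cancel₀ hp.ne', ENNReal.rpow_one]
  simp only [Pi.mul_apply, mul_one, ENNReal.one_rpow, lintegral_const, measure_univ,
    one_mul, hgg, one_div, inv_inv] at H
  exact H

@[simp] lemma epos_top : epos ⊤ = ⊤ := rfl
@[simp] lemma epos_bot : epos ⊥ = 0 := by simp [epos]
@[simp] lemma epos_coe (x : ℝ) : epos x = ENNReal.ofReal x := by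
  simp [epos]

lemma epos_le_exp (x : EReal) : epos x ≤ EReal.exp x := by
  induction x with
  | bot => simp
  | coe x =>
    rw [epos_coe, EReal.exp_coe]
    exact ENNReal.ofReal_le_ofReal (by have := Real.add_one_le_exp x; linarith)
  | top => simp

lemma coe_ennreal_fin {x : ℝ≥0∞} (hx : x ≠ ⊤) : (x : EReal) = ((x.toReal : ℝ) : EReal) := by
  rw [← EReal.toReal_coe_ennreal (x := x)]
  exact (EReal.coe_toReal (by simpa using hx) (EReal.coe_ennreal_ne_bot x)).symm

variable {Ω : Type*} [mΩ : MeasurableSpace Ω]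

lemma jensen_exp (μ : Measure Ω) [IsProbabilityMeasure μ] {W : Ω → EReal}
    (hW : Measurable[mΩ] W) :
    ((∫⁻ x, epos (W x) ∂μ : ℝ≥0∞) : EReal) - ((∫⁻ x, epos (-(W x)) ∂μ : ℝ≥0∞) : EReal)
      ≤ ENNReal.log (∫⁻ x, EReal.exp (W x) ∂μ) := by
  set a := ∫⁻ x, epos (W x) ∂μ with ha
  set b := ∫⁻ x, epos (-(W x)) ∂μ with hb
  by_cases hbtop : b = ⊤
  · rw [hbtop]
    rw [EReal.coe_ennreal_top, EReal.sub_top]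
    exact bot_le
  by_cases hatop : a = ⊤
  · have hrhs : (∫⁻ x, EReal.exp (W x) ∂μ) = ⊤ :=
      top_le_iff.mp (hatop ▸ lintegral_mono (fun x => epos_le_exp (W x)))
    rw [hrhs, ENNReal.log_top, hatop, EReal.coe_ennreal_top,
      coe_ennreal_fin hbtop, EReal.top_sub_coe]
  -- main case: both integrals finite
  have hWtop : ∀ᵐ x ∂μ, W x ≠ ⊤ := by
    rw [ae_iff]
    simp only [ne_eq, not_not]
    by_contra hne
    have hS : MeasurableSet {x | W x = ⊤} := hW (measurableSet_singleton ⊤)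
    have hle : ∫⁻ x, ({x | W x = ⊤}.indicator (fun _ => (⊤:ℝ≥0∞))) x ∂μ ≤ a :=
      lintegral_mono fun x => by
        by_cases hx : x ∈ {x | W x = ⊤}
        · have hxx : W x = ⊤ := hx
          simp [Set.indicator_apply, hx, hxx]
        · simp [Set.indicator_apply, hx]
    rw [lintegral_indicator_const hS] at hle
    exact hatop (top_le_iff.mp ((le_of_eq (ENNReal.top_mul hne).symm).trans hle))
  have hWbot : ∀ᵐ x ∂μ, W x ≠ ⊥ := by
    rw [ae_iff]
    simp only [ne_eq, not_not]
    by_contra hne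
    have hS : MeasurableSet {x | W x = ⊥} := hW (measurableSet_singleton ⊥)
    have hle : ∫⁻ x, ({x | W x = ⊥}.indicator (fun _ => (⊤:ℝ≥0∞))) x ∂μ ≤ b :=
      lintegral_mono fun x => by
        by_cases hx : x ∈ {x | W x = ⊥}
        · have : W x = ⊥ := hx
          simp [Set.indicator_apply, hx, this]
        · simp [Set.indicator_apply, hx]
    rw [lintegral_indicator_const hS] at hle
    exact hbtop (top_le_iff.mp ((le_of_eq (ENNReal.top_mul hne).symm).trans hle))
  set f : Ω → ℝ := fun x => (W x).toReal with hf
  have hfm : Measurable f := measurable_ereal_toReal.comp hW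
  have hae : ∀ᵐ x ∂μ, W x = ((f x : ℝ) : EReal) := by
    filter_upwards [hWtop, hWbot] with x h1 h2 using (EReal.coe_toReal h1 h2).symm
  have ha' : a = ∫⁻ x, ENNReal.ofReal (f x) ∂μ := lintegral_congr_ae <| by
    filter_upwards [hae] with x hx
    rw [hx, epos_coe]
  have hb' : b = ∫⁻ x, ENNReal.ofReal (-(f x)) ∂μ := lintegral_congr_ae <| by
    filter_upwards [hae] with x hx
    rw [hx, ← EReal.coe_neg, epos_coe]
  have hfi : Integrable f μ := by
    refine ⟨hfm.aestronglyMeasurable, ?_⟩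
    rw [hasFiniteIntegral_iff_norm]
    have hpt : ∀ x, ENNReal.ofReal ‖f x‖ ≤
        ENNReal.ofReal (f x) + ENNReal.ofReal (-(f x)) := by
      intro x
      rcases le_total 0 (f x) with hx | hx
      · rw [Real.norm_eq_abs, abs_of_nonneg hx]; exact le_add_right le_rfl
      · rw [Real.norm_eq_abs, abs_of_nonpos hx]; exact le_add_left le_rfl
    calc ∫⁻ x, ENNReal.ofReal ‖f x‖ ∂μ
        ≤ ∫⁻ x, (ENNReal.ofReal (f x) + ENNReal.ofReal (-(f x))) ∂μ := lintegral_mono hpt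
      _ = (∫⁻ x, ENNReal.ofReal (f x) ∂μ) + ∫⁻ x, ENNReal.ofReal (-(f x)) ∂μ :=
          lintegral_add_left hfm.ennreal_ofReal _
      _ < ⊤ := by
          rw [← ha', ← hb']
          exact ENNReal.add_lt_top.2 ⟨lt_top_iff_ne_top.2 hatop, lt_top_iff_ne_top.2 hbtop⟩
  have hint : ∫ x, f x ∂μ = a.toReal - b.toReal := by
    rw [integral_eq_lintegral_pos_part_sub_lintegral_neg_part hfi, ha', hb']
  have hlhs : (a : EReal) - (b : EReal) = ((a.toReal - b.toReal : ℝ) : EReal) := by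
    rw [coe_ennreal_fin hatop, coe_ennreal_fin hbtop, ← EReal.coe_sub]
  rw [hlhs, ← hint]
  have hexp_eq : ∫⁻ x, EReal.exp (W x) ∂μ = ∫⁻ x, ENNReal.ofReal (Real.exp (f x)) ∂μ :=
    lintegral_congr_ae <| by
      filter_upwards [hae] with x hx
      rw [hx, EReal.exp_coe]
  rw [hexp_eq]
  by_cases htop : ∫⁻ x, ENNReal.ofReal (Real.exp (f x)) ∂μ = ⊤
  · rw [htop, ENNReal.log_top]; exact le_top
  have hgi : Integrable (fun x => Real.exp (f x)) μ := by
    refine ⟨(Real.continuous_exp.measurable.comp hfm).aestronglyMeasurable, ?_⟩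
    rw [hasFiniteIntegral_iff_norm]
    have : ∀ x : Ω, ENNReal.ofReal ‖Real.exp (f x)‖ = ENNReal.ofReal (Real.exp (f x)) :=
      fun x => by rw [Real.norm_eq_abs, Real.abs_exp]
    rw [lintegral_congr this]
    exact lt_top_iff_ne_top.2 htop
  have hjen : Real.exp (∫ x, f x ∂μ) ≤ ∫ x, Real.exp (f x) ∂μ :=
    convexOn_exp.map_integral_le Real.continuous_exp.continuousOn isClosed_univ
      (ae_of_all _ fun _ => Set.mem_univ _) hfi hgi
  have h1 : ENNReal.ofReal (∫ x, Real.exp (f x) ∂μ) = ∫⁻ x, ENNReal.ofReal (Real.exp (f x)) ∂μ :=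
    ofReal_integral_eq_lintegral_ofReal hgi (ae_of_all _ fun x => (Real.exp_pos _).le)
  calc ((∫ x, f x ∂μ : ℝ) : EReal)
      = ENNReal.log (ENNReal.ofReal (Real.exp (∫ x, f x ∂μ))) := by
        rw [ENNReal.log_ofReal_of_pos (Real.exp_pos _), Real.log_exp]
    _ ≤ ENNReal.log (∫⁻ x, ENNReal.ofReal (Real.exp (f x)) ∂μ) := by
        rw [← h1]
        exact ENNReal.log_monotone (ENNReal.ofReal_le_ofReal hjen)

end Aux

/-- for `γ > 0`, the dynamic risk sensitive criterion `φ^γ` is supermartingale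
time consistent on `𝕍̃`: for `s > t ≥ 0` and any `ℱₛ`-measurable extended-real `mₛ`,
if `φ^γ_s(V) ≥ mₛ` a.s. then `φ^γ_t(V) ≥ E[mₛ|ℱₜ]` a.s. -/
theorem drsc_supermartingale_time_consistent {Ω : Type*} [m : MeasurableSpace Ω]
    [StandardBorelSpace Ω] (P : Measure Ω) [IsProbabilityMeasure P]
    (ℱ : MeasureTheory.Filtration ℕ m) (γ : ℝ) (hγ : 0 < γ)
    (V : ℕ → Ω → ℝ) (hV : MemVtilde ℱ P V)
    (s t : ℕ) (hst : t < s) (ms : Ω → EReal) (hms : Measurable[ℱ s] ms)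
    (h : ∀ᵐ ω ∂P, ms ω ≤ drsc P ℱ γ s V ω) :
    ∀ᵐ ω ∂P, erealCondExp P (ℱ t) ms ω ≤ drsc P ℱ γ t V ω := by
  have hγ0 : γ ≠ 0 := hγ.ne'
  set mt : SubSigma Ω m := ⟨ℱ t, ℱ.le t⟩ with hmt
  set msig : SubSigma Ω m := ⟨ℱ s, ℱ.le s⟩ with hmsig
  set fT : ℕ → Ω → ℝ≥0∞ := fun T x => (ENNReal.ofReal (V T x)) ^ γ with hfT
  have hfTm : ∀ T, Measurable (fT T) := fun T =>
    (((hV.1 T).mono (ℱ.le T) le_rfl).ennreal_ofReal).pow_const γ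
  set G : ℕ → Ω → ℝ≥0∞ := fun T x => ∫⁻ y, fT T y ∂(cek P msig x) with hG
  have hGm : ∀ T, Measurable (G T) := fun T => cek_lintegral_measurable P msig (hfTm T)
  set Φ : ℕ → Ω → EReal := fun T x => (((γ * T)⁻¹ : ℝ) : EReal) * ENNReal.log (G T x) with hΦ
  have h' : ∀ᵐ x ∂P, ms x ≤ Filter.liminf (fun T => Φ T x) Filter.atTop := by
    filter_upwards [h] with x hx
    rw [drsc, if_neg hγ0] at hx
    exact hx
  have h2 : ∀ᵐ ω ∂P, ∀ᵐ x ∂(cek P mt ω), ms x ≤ Filter.liminf (fun T => Φ T x) Filter.atTop :=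
    cek_ae_of_ae P mt h'
  have htower : ∀ᵐ ω ∂P, ∀ T : ℕ,
      ∫⁻ x, fT T x ∂(cek P mt ω) = ∫⁻ x, G T x ∂(cek P mt ω) := by
    rw [ae_all_iff]
    intro T
    exact cek_tower P mt msig (ℱ.mono hst.le) (hfTm T)
  filter_upwards [h2, htower] with ω hω htw
  rw [drsc, if_neg hγ0]
  have hμprob : IsProbabilityMeasure (cek P mt ω) := inferInstance
  -- measurability of the exponential of Φ
  have hΦΨ : ∀ (T : ℕ) (x : Ω), EReal.exp (Φ T x) = (G T x) ^ ((γ * (T:ℝ))⁻¹) := by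
    intro T x
    rw [hΦ]
    simp only
    rw [mul_comm (((γ * (T:ℝ))⁻¹ : ℝ) : EReal) _, EReal.exp_mul, ENNReal.exp_log]
  have hΨm : ∀ T : ℕ, Measurable fun x => EReal.exp (Φ T x) := by
    intro T
    have : (fun x => EReal.exp (Φ T x)) = fun x => (G T x) ^ ((γ * (T:ℝ))⁻¹) :=
      funext (hΦΨ T)
    rw [this]
    exact (hGm T).pow_const _
  -- eventual inequality
  have hev : ∀ᶠ T : ℕ in Filter.atTop,
      ENNReal.log (∫⁻ x, EReal.exp (Φ T x) ∂(cek P mt ω))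
        ≤ (((γ * T)⁻¹ : ℝ) : EReal) * ENNReal.log (∫⁻ x, fT T x ∂(cek P mt ω)) := by
    have hT0 : ∀ᶠ T : ℕ in Filter.atTop, 1 < γ * (T:ℝ) := by
      have htend : Filter.Tendsto (fun T : ℕ => γ * (T:ℝ)) Filter.atTop Filter.atTop :=
        (tendsto_natCast_atTop_atTop (R := ℝ)).const_mul_atTop hγ
      exact htend.eventually_gt_atTop 1
    filter_upwards [hT0] with T hT
    have hpos : (0:ℝ) < γ * T := lt_trans one_pos hT
    have hp : 0 < (γ * (T:ℝ))⁻¹ := inv_pos.2 hpos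
    have hp1 : (γ * (T:ℝ))⁻¹ < 1 := by
      rw [inv_lt_one_iff₀]; right; exact hT
    calc ENNReal.log (∫⁻ x, EReal.exp (Φ T x) ∂(cek P mt ω))
        = ENNReal.log (∫⁻ x, (G T x) ^ ((γ * (T:ℝ))⁻¹) ∂(cek P mt ω)) := by
          rw [lintegral_congr (hΦΨ T)]
      _ ≤ ENNReal.log ((∫⁻ x, G T x ∂(cek P mt ω)) ^ ((γ * (T:ℝ))⁻¹)) :=
          ENNReal.log_monotone
            (lintegral_rpow_le_rpow_lintegral (cek P mt ω) (hGm T).aemeasurable hp hp1)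
      _ = (((γ * T)⁻¹ : ℝ) : EReal) * ENNReal.log (∫⁻ x, G T x ∂(cek P mt ω)) :=
          ENNReal.log_rpow
      _ = (((γ * T)⁻¹ : ℝ) : EReal) * ENNReal.log (∫⁻ x, fT T x ∂(cek P mt ω)) := by
          rw [htw T]
  have hliminf : Filter.liminf
        (fun T => ENNReal.log (∫⁻ x, EReal.exp (Φ T x) ∂(cek P mt ω))) Filter.atTop
      ≤ Filter.liminf (fun T : ℕ => (((γ * T)⁻¹ : ℝ) : EReal) *
          ENNReal.log (∫⁻ x, fT T x ∂(cek P mt ω))) Filter.atTop :=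
    Filter.liminf_le_liminf hev
  have h3 : ENNReal.log (Filter.liminf
        (fun T => ∫⁻ x, EReal.exp (Φ T x) ∂(cek P mt ω)) Filter.atTop)
      = Filter.liminf
        (fun T => ENNReal.log (∫⁻ x, EReal.exp (Φ T x) ∂(cek P mt ω))) Filter.atTop := by
    exact ENNReal.logOrderIso.liminf_apply
  have h4 : ∫⁻ x, Filter.liminf (fun T => EReal.exp (Φ T x)) Filter.atTop ∂(cek P mt ω)
      ≤ Filter.liminf (fun T => ∫⁻ x, EReal.exp (Φ T x) ∂(cek P mt ω)) Filter.atTop :=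
    lintegral_liminf_le hΨm
  have h5 : ∀ x : Ω, Filter.liminf (fun T => EReal.exp (Φ T x)) Filter.atTop
      = EReal.exp (Filter.liminf (fun T => Φ T x) Filter.atTop) := by
    intro x
    exact (EReal.expOrderIso.liminf_apply).symm
  have h6 : ∫⁻ x, EReal.exp (ms x) ∂(cek P mt ω)
      ≤ ∫⁻ x, EReal.exp (Filter.liminf (fun T => Φ T x) Filter.atTop) ∂(cek P mt ω) :=
    lintegral_mono_ae (by filter_upwards [hω] with x hx using EReal.exp_monotone hx)
  have h7 : erealCondExp P (ℱ t) ms ω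
      ≤ ENNReal.log (∫⁻ x, EReal.exp (ms x) ∂(cek P mt ω)) := by
    have := jensen_exp (cek P mt ω) (hms.mono (ℱ.le s) le_rfl)
    exact this
  calc erealCondExp P (ℱ t) ms ω
      ≤ ENNReal.log (∫⁻ x, EReal.exp (ms x) ∂(cek P mt ω)) := h7
    _ ≤ ENNReal.log (∫⁻ x, EReal.exp (Filter.liminf (fun T => Φ T x) Filter.atTop)
          ∂(cek P mt ω)) := ENNReal.log_monotone h6
    _ = ENNReal.log (∫⁻ x, Filter.liminf (fun T => EReal.exp (Φ T x)) Filter.atTop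
          ∂(cek P mt ω)) := by rw [lintegral_congr h5]
    _ ≤ ENNReal.log (Filter.liminf
          (fun T => ∫⁻ x, EReal.exp (Φ T x) ∂(cek P mt ω)) Filter.atTop) :=
        ENNReal.log_monotone h4
    _ = Filter.liminf
          (fun T => ENNReal.log (∫⁻ x, EReal.exp (Φ T x) ∂(cek P mt ω))) Filter.atTop := h3
    _ ≤ Filter.liminf (fun T : ℕ => (((γ * T)⁻¹ : ℝ) : EReal) *
          ENNReal.log (∫⁻ x, fT T x ∂(cek P mt ω))) Filter.atTop := hliminf
end

section
/- On the filtered probability space $([0,1],\mathcal{B}([0,1]),\{\mathcal{F}_t\},\lambda)$ with $\mathcal{F}_0$ trivial and $\mathcal{F}_1=\mathcal{B}([0,1])$, define for $T\ge1$ the process $\widehat{V}_T(\omega)=Te^T$ for $\omega\in[0,1/T]$ and $\widehat{V}_T(\omega)=1$ for $\omega\in(1/T,1]$. Then $\liminf_{T\to\infty}\frac{1}{T}\ln\widehat{V}_T(\omega)=0$ for every $\omega\in(0,1]$, while $\liminf_{T\to\infty}\frac{1}{T}\ln E[\widehat{V}_T]\ge 1$. Consequently the risk-seeking criterion $\varphi^1$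 with $\gamma=1$ is not submartingale time consistent: $\varphi^1_1(\widehat{V})\le 0$ a.s. but $\varphi^1_0(\widehat{V})\ge1 > E[0]$. -/
open MeasureTheory Filter Set

/-- The process `V̂_T` on `([0,1], ℬ, λ)`: `V̂_T(ω) = T·e^T` for `ω ∈ [0, 1/T]` and
`V̂_T(ω) = 1` otherwise. -/
noncomputable def Vhat (T : ℕ) (ω : ℝ) : ℝ :=
  if ω ≤ 1 / (T : ℝ) then (T : ℝ) * Real.exp T else 1

lemma Vhat_eq (T : ℕ) :
    (fun ω => Vhat T ω) =
      fun ω => Set.indicator (Set.Iic (1 / (T : ℝ)))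
        (fun _ => (T : ℝ) * Real.exp T - 1) ω + 1 := by
  funext ω
  simp only [Vhat, Set.indicator, Set.mem_Iic]
  split <;> ring

lemma integral_Vhat (T : ℕ) (hT : 1 ≤ T) :
    ∫ ω in Set.Icc (0 : ℝ) 1, Vhat T ω = Real.exp T + 1 - 1 / T := by
  have hTpos : (0 : ℝ) < T := by exact_mod_cast hT
  have hTle : 1 / (T : ℝ) ≤ 1 := by
    rw [div_le_one hTpos]; exact_mod_cast hT
  rw [Vhat_eq]
  rw [MeasureTheory.integral_add]
  · rw [MeasureTheory.integral_indicator_const _ measurableSet_Iic,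
      MeasureTheory.integral_const]
    simp only [Measure.real]
    rw [Measure.restrict_apply measurableSet_Iic, Measure.restrict_apply_univ]
    have h1 : Set.Iic (1 / (T : ℝ)) ∩ Set.Icc 0 1 = Set.Icc 0 (1 / (T : ℝ)) := by
      ext x
      simp only [Set.mem_inter_iff, Set.mem_Iic, Set.mem_Icc]
      constructor
      · rintro ⟨h, h0, _⟩; exact ⟨h0, h⟩
      · rintro ⟨h0, h⟩; exact ⟨h, h0, h.trans hTle⟩
    rw [h1, Real.volume_Icc, Real.volume_Icc]
    have h2 : (0:ℝ) ≤ 1 / T := by positivity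
    rw [ENNReal.toReal_ofReal (by linarith), ENNReal.toReal_ofReal (by norm_num)]
    simp only [smul_eq_mul, sub_zero]
    field_simp
    ring
  · rw [MeasureTheory.integrable_indicator_iff measurableSet_Iic]
    exact (integrableOn_const (ne_of_lt (by
      rw [Measure.restrict_apply measurableSet_Iic]
      exact lt_of_le_of_lt (measure_mono Set.inter_subset_right)
        (by rw [Real.volume_Icc]; exact ENNReal.ofReal_lt_top))))
  · exact integrable_const 1

lemma part2 : (1 : ℝ) ≤ Filter.liminf
    (fun T : ℕ => (T : ℝ)⁻¹ * Real.log (∫ ω in Set.Icc (0 : ℝ) 1, Vhat T ω)) Filter.atTop := by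
  have hev : ∀ᶠ T : ℕ in atTop,
      (1 : ℝ) ≤ (T : ℝ)⁻¹ * Real.log (∫ ω in Set.Icc (0 : ℝ) 1, Vhat T ω) := by
    filter_upwards [Filter.eventually_ge_atTop 1] with T hT
    have hTpos : (0 : ℝ) < T := by exact_mod_cast hT
    have hTle : 1 / (T : ℝ) ≤ 1 := by rw [div_le_one hTpos]; exact_mod_cast hT
    rw [integral_Vhat T hT]
    have hle : Real.exp T ≤ Real.exp T + 1 - 1 / T := by linarith
    have hlog : (T : ℝ) ≤ Real.log (Real.exp T + 1 - 1 / T) := by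
      calc (T : ℝ) = Real.log (Real.exp T) := (Real.log_exp _).symm
        _ ≤ _ := Real.log_le_log (Real.exp_pos _) hle
    calc (1 : ℝ) = (T : ℝ)⁻¹ * T := by field_simp
      _ ≤ _ := mul_le_mul_of_nonneg_left hlog (by positivity)
  have hub : ∀ᶠ T : ℕ in atTop,
      (T : ℝ)⁻¹ * Real.log (∫ ω in Set.Icc (0 : ℝ) 1, Vhat T ω) ≤ 2 := by
    filter_upwards [Filter.eventually_ge_atTop 1] with T hT
    have hTpos : (0 : ℝ) < T := by exact_mod_cast hT
    have hTle : 1 / (T : ℝ) ≤ 1 := by rw [div_le_one hTpos]; exact_mod_cast hT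
    have hTge : (1 : ℝ) ≤ T := by exact_mod_cast hT
    rw [integral_Vhat T hT]
    have h1T : (0 : ℝ) < 1 / T := by positivity
    have hle : Real.exp (↑T) + 1 - 1 / ↑T ≤ Real.exp (2 * T) := by
      have h2 : Real.exp (↑T) + 1 ≤ 2 * Real.exp (↑T) := by
        have := Real.one_le_exp (le_of_lt hTpos)
        linarith
      have h4 : (2 : ℝ) ≤ Real.exp (↑T) := by
        have := Real.add_one_le_exp (1 : ℝ)
        have h5 : Real.exp (1 : ℝ) ≤ Real.exp (↑T) := Real.exp_le_exp.2 hTge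
        linarith
      have h3 : (2 : ℝ) * Real.exp (↑T) ≤ Real.exp (↑T) * Real.exp (↑T) := by
        nlinarith [Real.exp_pos (T : ℝ)]
      rw [two_mul, Real.exp_add]
      linarith
    have hpos : (0 : ℝ) < Real.exp (↑T) + 1 - 1 / ↑T := by
      have := Real.exp_pos (T : ℝ); linarith
    have hlog : Real.log (Real.exp (↑T) + 1 - 1 / ↑T) ≤ 2 * T := by
      calc Real.log (Real.exp (↑T) + 1 - 1 / ↑T) ≤ Real.log (Real.exp (2 * T)) :=
            Real.log_le_log hpos hle
        _ = 2 * T := Real.log_exp _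
    calc (T : ℝ)⁻¹ * Real.log (Real.exp (↑T) + 1 - 1 / ↑T)
        ≤ (T : ℝ)⁻¹ * (2 * T) := mul_le_mul_of_nonneg_left hlog (by positivity)
      _ = 2 := by field_simp
  exact le_liminf_of_le (isCoboundedUnder_ge_of_eventually_le _ hub) hev

/-- for the process `V̂`, `liminf_T (1/T) ln V̂_T(ω) = 0` for every
`ω ∈ (0,1]`, while `liminf_T (1/T) ln E[V̂_T] ≥ 1`. Consequently the risk-seeking criterion
`φ¹` (with `γ = 1`) is not submartingale time consistent: `φ¹₁(V̂) ≤ 0` a.s. but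
`φ¹₀(V̂) ≥ 1 > E[0] = 0`. -/
theorem drsc_not_submartingale_example :
    (∀ ω : ℝ, 0 < ω →
      Filter.liminf (fun T : ℕ => (T : ℝ)⁻¹ * Real.log (Vhat T ω)) Filter.atTop = 0) ∧
    (1 ≤ Filter.liminf
      (fun T : ℕ => (T : ℝ)⁻¹ * Real.log (∫ ω in Set.Icc (0 : ℝ) 1, Vhat T ω)) Filter.atTop) ∧
    ((∀ᵐ ω ∂(MeasureTheory.volume.restrict (Set.Icc (0 : ℝ) 1)),
        Filter.liminf (fun T : ℕ => (T : ℝ)⁻¹ * Real.log (Vhat T ω)) Filter.atTop ≤ 0) ∧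
      ¬ (Filter.liminf
          (fun T : ℕ => (T : ℝ)⁻¹ * Real.log (∫ ω in Set.Icc (0 : ℝ) 1, Vhat T ω)) Filter.atTop
            ≤ 0)) := by
  have hpt : ∀ ω : ℝ, 0 < ω →
      Filter.liminf (fun T : ℕ => (T : ℝ)⁻¹ * Real.log (Vhat T ω)) Filter.atTop = 0 := by
    intro ω hω
    have hev : ∀ᶠ T : ℕ in atTop,
        (T : ℝ)⁻¹ * Real.log (Vhat T ω) = (0 : ℝ) := by
      have h0 : Tendsto (fun T : ℕ => 1 / (T : ℝ)) atTop (nhds 0) :=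
        tendsto_one_div_atTop_nhds_zero_nat
      filter_upwards [h0.eventually_lt_const hω] with T hT
      have hneg : ¬ ω ≤ 1 / (T : ℝ) := not_le.2 hT
      rw [Vhat, if_neg hneg, Real.log_one, mul_zero]
    rw [Filter.liminf_congr hev, Filter.liminf_const]
  refine ⟨hpt, part2, ?_, ?_⟩
  · have hne : ∀ᵐ ω ∂(MeasureTheory.volume.restrict (Set.Icc (0 : ℝ) 1)), ω ≠ (0 : ℝ) := by
      refine (MeasureTheory.ae_restrict_of_ae ?_)
      have : MeasureTheory.volume ({(0 : ℝ)} : Set ℝ) = 0 := Real.volume_singleton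
      rw [MeasureTheory.ae_iff]
      simpa using this
    have hmem : ∀ᵐ ω ∂(MeasureTheory.volume.restrict (Set.Icc (0 : ℝ) 1)),
        ω ∈ Set.Icc (0 : ℝ) 1 := MeasureTheory.ae_restrict_mem measurableSet_Icc
    filter_upwards [hne, hmem] with ω hω hmemω
    have hpos : 0 < ω := lt_of_le_of_ne hmemω.1 (Ne.symm hω)
    rw [hpt ω hpos]
  · intro h
    have := part2
    linarith
end
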